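/- arXiv:2207.06335 — 5 statements merged into one kernel-verified Lean document; each statement's English description precedes it below -/
import Mathlib

section
/- Let V be a finite-dimensional real normed vector space. Suppose a function φ : V → ℤ admits two decompositions as finite integer combinations of indicator functions of nonempty compact convex sets, i.e. Σ_{α∈A} C_α·1_{X_α}(v) = Σ_{β∈B} D_β·1_{Y_β}(v) for all v ∈ V, where A and B are finite index sets, C_α, D_β ∈ ℤ, and each X_α and each Y_β is a nonempty compact convex subset of V. Then Σ_{α∈A} C_α = Σ_{β∈B} D_β. -/
open Module

/-- 1-D combinatorial step: if for every `t` the sum of coefficients of intervals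
containing `t` vanishes, then the total coefficient sum vanishes. -/
lemma euler_one_dim {I : Type*} [Fintype I] (E : I → ℤ) (m M : I → ℝ) (hmM : ∀ i, m i ≤ M i)
    (h : ∀ t : ℝ, ∑ i ∈ Finset.univ.filter (fun i => m i ≤ t ∧ t ≤ M i), E i = 0) :
    ∑ i, E i = 0 := by
  classical
  have key : ∀ s : ℝ, ∑ i ∈ Finset.univ.filter (fun i => m i = s), E i = 0 := by
    intro s
    -- pick t < s above all values of m, M that are < s
    obtain ⟨t, hts, hall⟩ : ∃ t < s, ∀ x ∈ Finset.image m Finset.univ ∪ Finset.image M Finset.univ,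
        x < s → x < t := by
      set G := (Finset.image m Finset.univ ∪ Finset.image M Finset.univ).filter (fun y => y < s) with hG
      by_cases hGne : G.Nonempty
      · refine ⟨(G.max' hGne + s) / 2, by
          have := Finset.mem_filter.mp (G.max'_mem hGne); linarith [this.2], ?_⟩
        intro x hx hxs
        have hxG : x ∈ G := Finset.mem_filter.mpr ⟨hx, hxs⟩
        have := G.le_max' x hxG
        have hm' := (Finset.mem_filter.mp (G.max'_mem hGne)).2
        linarith
      · refine ⟨s - 1, by linarith, ?_⟩
        intro x hx hxs
        have hm : x ∈ G := Finset.mem_filter.mpr ⟨hx, hxs⟩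
        exact absurd hm (fun hm => hGne ⟨x, hm⟩)
    have hsplit : Finset.univ.filter (fun i => m i ≤ s ∧ s ≤ M i) =
        Finset.univ.filter (fun i => m i = s) ∪
          Finset.univ.filter (fun i => m i ≤ t ∧ t ≤ M i) := by
      ext i
      simp only [Finset.mem_filter, Finset.mem_union, Finset.mem_univ, true_and]
      constructor
      · rintro ⟨h1, h2⟩
        rcases eq_or_lt_of_le h1 with he | hlt
        · exact Or.inl he
        · refine Or.inr ⟨le_of_lt (hall _ ?_ hlt), le_trans (le_of_lt hts) h2⟩
          exact Finset.mem_union_left _ (Finset.mem_image_of_mem m (Finset.mem_univ i))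
      · rintro (he | ⟨h1, h2⟩)
        · exact ⟨le_of_eq he, he ▸ hmM i⟩
        · refine ⟨le_trans h1 (le_of_lt hts), ?_⟩
          by_contra hMs
          push_neg at hMs
          have : M i < t := hall _ (Finset.mem_union_right _
            (Finset.mem_image_of_mem M (Finset.mem_univ i))) hMs
          linarith
    have hdisj : Disjoint (Finset.univ.filter (fun i => m i = s))
        (Finset.univ.filter (fun i => m i ≤ t ∧ t ≤ M i)) := by
      rw [Finset.disjoint_left]
      intro i hi hi'
      simp only [Finset.mem_filter, Finset.mem_univ, true_and] at hi hi'
      linarith [hi'.1, hi ▸ hts]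
    have := h s
    rw [hsplit, Finset.sum_union hdisj, h t, add_zero] at this
    exact this
  -- group the total sum by the value of m
  have hmaps : ∀ i ∈ Finset.univ, m i ∈ Finset.image m Finset.univ :=
    fun i _ => Finset.mem_image_of_mem m (Finset.mem_univ i)
  rw [← Finset.sum_fiberwise_of_maps_to hmaps E]
  exact Finset.sum_eq_zero fun s _ => key s

universe u v

/-- Main induction: a vanishing combination of indicators of nonempty compact convex sets
has vanishing coefficient sum. -/
lemma euler_aux : ∀ (n : ℕ) (V : Type u) [NormedAddCommGroup V] [NormedSpace ℝ V]
    [FiniteDimensional ℝ V], finrank ℝ V = n →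
    ∀ {I : Type v} [Fintype I] (E : I → ℤ) (Z : I → Set V),
    (∀ i, (Z i).Nonempty) → (∀ i, IsCompact (Z i)) → (∀ i, Convex ℝ (Z i)) →
    (∀ v : V, ∑ i, E i * (Z i).indicator 1 v = 0) → ∑ i, E i = 0 := by
  intro n
  induction n with
  | zero =>
    intro V _ _ _ hrk I _ E Z hne _ _ hsum
    have hsub : Subsingleton V := finrank_zero_iff.mp hrk
    have h0 := hsum 0
    rw [← h0]
    refine Finset.sum_congr rfl fun i _ => ?_
    obtain ⟨v, hv⟩ := hne i
    have h0m : (0 : V) ∈ Z i := (Subsingleton.elim v 0) ▸ hv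
    rw [Set.indicator_of_mem h0m]
    simp
  | succ n ih =>
    intro V _ _ _ hrk I _ E Z hne hcpt hcvx hsum
    classical
    have hnt : Nontrivial V := (finrank_pos_iff (R := ℝ)).mp (by omega)
    obtain ⟨x, hx⟩ := exists_ne (0 : V)
    obtain ⟨g, hg1, hgx⟩ := exists_dual_vector ℝ x (norm_ne_zero_iff.mpr hx)
    have hxn : (0:ℝ) < ‖x‖ := norm_pos_iff.mpr hx
    have hgx' : g x = ‖x‖ := by exact_mod_cast hgx
    set K := LinearMap.ker (g : V →ₗ[ℝ] ℝ) with hKdef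
    have hK : finrank ℝ K = n := by
      have h2 := LinearMap.finrank_range_add_finrank_ker (g : V →ₗ[ℝ] ℝ)
      have hr : LinearMap.range (g : V →ₗ[ℝ] ℝ) = ⊤ := by
        rw [LinearMap.range_eq_top]
        intro t
        refine ⟨(t / ‖x‖) • x, ?_⟩
        simp only [ContinuousLinearMap.coe_coe, map_smul, smul_eq_mul, hgx']
        field_simp
      rw [hr, finrank_top, hrk] at h2
      simp only [finrank_self] at h2
      rw [hKdef]
      omega
    have hmemK : ∀ w : V, w ∈ K ↔ g w = 0 := by
      intro w
      rw [hKdef, LinearMap.mem_ker]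
      simp
    set m : I → ℝ := fun i => sInf (g '' Z i) with hmdef
    set M : I → ℝ := fun i => sSup (g '' Z i) with hMdef
    have hfc : ∀ i, IsCompact (g '' Z i) := fun i => (hcpt i).image g.continuous
    have hfne : ∀ i, (g '' Z i).Nonempty := fun i => (hne i).image _
    have hmem_m : ∀ i, m i ∈ g '' Z i := fun i => (hfc i).sInf_mem (hfne i)
    have hmem_M : ∀ i, M i ∈ g '' Z i := fun i => (hfc i).sSup_mem (hfne i)
    have hiff : ∀ i (t : ℝ), t ∈ g '' Z i ↔ (m i ≤ t ∧ t ≤ M i) := by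
      intro i t
      constructor
      · intro ht
        exact ⟨csInf_le (hfc i).bddBelow ht, le_csSup (hfc i).bddAbove ht⟩
      · intro ⟨ht1, ht2⟩
        have hcvx' : Convex ℝ (g '' Z i) := (hcvx i).linear_image (g : V →ₗ[ℝ] ℝ)
        exact hcvx'.ordConnected.out (hmem_m i) (hmem_M i) ⟨ht1, ht2⟩
    refine euler_one_dim E m M (fun i => csInf_le (hfc i).bddBelow (hmem_M i)) ?_
    intro t
    set S := Finset.univ.filter (fun i => m i ≤ t ∧ t ≤ M i) with hSdef
    set c : V := (t / ‖x‖) • x with hcdef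
    have hgc : g c = t := by
      simp only [hcdef, map_smul, smul_eq_mul, hgx']
      field_simp
    set ι : K → V := fun w => (w : V) + c with hιdef
    have hgι : ∀ w : K, g (ι w) = t := by
      intro w
      have hw0 : g (w : V) = 0 := (hmemK _).mp w.2
      simp [hιdef, map_add, hw0, hgc]
    have hιiso : Isometry ι := by
      apply Isometry.of_dist_eq
      intro a b
      simp only [hιdef, dist_eq_norm, add_sub_add_right_eq_sub]
      rw [← Submodule.coe_sub]
      rfl
    set Z' : {i // i ∈ S} → Set K := fun i => ι ⁻¹' Z i.1 with hZ'def
    have h1 : ∀ i : {i // i ∈ S}, (Z' i).Nonempty := by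
      intro i
      have hiS := (Finset.mem_filter.mp i.2).2
      obtain ⟨v, hvZ, hgv⟩ := (hiff i.1 t).mpr hiS
      refine ⟨⟨v - c, ?_⟩, ?_⟩
      · rw [hmemK]
        simp [map_sub, hgv, hgc]
      · show ι _ ∈ Z i.1
        simp only [hιdef, sub_add_cancel]
        exact hvZ
    have h2 : ∀ i : {i // i ∈ S}, IsCompact (Z' i) :=
      fun i => hιiso.isClosedEmbedding.isCompact_preimage (hcpt i.1)
    have h3 : ∀ i : {i // i ∈ S}, Convex ℝ (Z' i) := by
      intro i w1 hw1 w2 hw2 a b ha hb hab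
      show ι (a • w1 + b • w2) ∈ Z i.1
      have hcc : a • c + b • c = c := by rw [← add_smul, hab, one_smul]
      have heq : a • ι w1 + b • ι w2 = ι (a • w1 + b • w2) := by
        simp only [hιdef, Submodule.coe_add, Submodule.coe_smul]
        conv_rhs => rw [← hcc]
        rw [smul_add, smul_add]
        abel
      rw [← heq]
      exact hcvx i.1 hw1 hw2 ha hb hab
    have h4 : ∀ w : K, ∑ i : {i // i ∈ S}, E i.1 * (Z' i).indicator 1 w = 0 := by
      intro w
      have hrw : ∀ i : {i // i ∈ S}, (Z' i).indicator (1 : K → ℤ) w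
          = (Z i.1).indicator (1 : V → ℤ) (ι w) := by
        intro i
        by_cases hmem : ι w ∈ Z i.1
        · rw [Set.indicator_of_mem hmem, Set.indicator_of_mem (show w ∈ Z' i from hmem)]
          rfl
        · rw [Set.indicator_of_notMem hmem,
            Set.indicator_of_notMem (show w ∉ Z' i from hmem)]
      calc ∑ i : {i // i ∈ S}, E i.1 * (Z' i).indicator 1 w
          = ∑ i ∈ S, E i * (Z i).indicator 1 (ι w) := by
            rw [← Finset.sum_coe_sort S (fun i => E i * (Z i).indicator 1 (ι w))]
            exact Finset.sum_congr rfl fun i _ => by rw [hrw i]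
        _ = ∑ i, E i * (Z i).indicator 1 (ι w) := by
            apply Finset.sum_subset (Finset.subset_univ S)
            intro i _ hiS
            have hnm : ι w ∉ Z i := by
              intro hmem
              exact hiS (Finset.mem_filter.mpr ⟨Finset.mem_univ i,
                (hiff i t).mp ⟨ι w, hmem, hgι w⟩⟩)
            rw [Set.indicator_of_notMem hnm, mul_zero]
        _ = 0 := hsum (ι w)
    have hfin := ih K hK (fun i : {i // i ∈ S} => E i.1) Z' h1 h2 h3 h4
    rwa [Finset.sum_coe_sort] at hfin

/-- **Well-definedness of the Euler integral.**
If a function `φ : V → ℤ` admits two decompositions as finite integer combinations of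
indicator functions of nonempty compact convex subsets of a finite-dimensional real
normed vector space `V`, then the total coefficient sums agree. -/
theorem euler_integral_well_defined
    (V : Type*) [NormedAddCommGroup V] [NormedSpace ℝ V] [FiniteDimensional ℝ V]
    {A B : Type*} [Fintype A] [Fintype B]
    (C : A → ℤ) (D : B → ℤ) (X : A → Set V) (Y : B → Set V)
    (hXne : ∀ a, (X a).Nonempty) (hXcpt : ∀ a, IsCompact (X a)) (hXcvx : ∀ a, Convex ℝ (X a))
    (hYne : ∀ b, (Y b).Nonempty) (hYcpt : ∀ b, IsCompact (Y b)) (hYcvx : ∀ b, Convex ℝ (Y b))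
    (h : ∀ v : V, ∑ a, C a * (X a).indicator 1 v = ∑ b, D b * (Y b).indicator 1 v) :
    ∑ a, C a = ∑ b, D b := by
  have := euler_aux (finrank ℝ V) V rfl (Sum.elim C (-D)) (Sum.elim X Y)
    (fun i => Sum.rec hXne hYne i) (fun i => Sum.rec hXcpt hYcpt i)
    (fun i => Sum.rec hXcvx hYcvx i) ?_
  · rw [Fintype.sum_sum_type] at this
    simp only [Sum.elim_inl, Sum.elim_inr, Pi.neg_apply, Finset.sum_neg_distrib] at this
    omega
  · intro v
    rw [Fintype.sum_sum_type]
    simp only [Sum.elim_inl, Sum.elim_inr, Pi.neg_apply, neg_mul]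
    rw [Finset.sum_neg_distrib, h v]
    ring
end

section
/- Let V be a finite-dimensional real normed vector space, and let G be the subgroup of the additive group of functions V → ℤ generated by the indicator functions 1_X of nonempty compact convex subsets X ⊆ V. Then there exists a unique group homomorphism ∫ : G → ℤ such that ∫(1_X) = 1 for every nonempty compact convex subset X ⊆ V. -/
open Set

open scoped Classical in
/-- Key combinatorial lemma predicate: any vanishing integer combination of indicators of
compact convex sets has vanishing "Euler sum" of coefficients (weighted by nonemptiness). -/
def EulerKey (V : Type*) [NormedAddCommGroup V] [NormedSpace ℝ V] : Prop :=
  ∀ (ι : Type) (s : Finset ι) (c : ι → ℤ) (X : ι → Set V),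
    (∀ i ∈ s, IsCompact (X i)) → (∀ i ∈ s, Convex ℝ (X i)) →
    (∀ v, ∑ i ∈ s, c i * (X i).indicator 1 v = 0) →
    ∑ i ∈ s, c i * (if (X i).Nonempty then 1 else 0) = 0

theorem eulerKey_real : EulerKey ℝ := by
  classical
  intro ι s c S hcomp hconv hzero
  set s' := s.filter (fun i => (S i).Nonempty) with hs'
  have hsub : s' ⊆ s := Finset.filter_subset _ _
  have hgoal : ∑ i ∈ s, c i * (if (S i).Nonempty then 1 else 0) = ∑ i ∈ s', c i := by
    rw [hs', Finset.sum_filter]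
    exact Finset.sum_congr rfl fun i _ => by by_cases h : (S i).Nonempty <;> simp [h]
  rw [hgoal]
  have hne : ∀ i ∈ s', (S i).Nonempty := fun i hi => (Finset.mem_filter.mp hi).2
  have hIcc : ∀ i ∈ s', S i = Icc (sInf (S i)) (sSup (S i)) := fun i hi =>
    eq_Icc_of_connected_compact ⟨hne i hi, (hconv i (hsub hi)).isPreconnected⟩
      (hcomp i (hsub hi))
  have hab : ∀ i ∈ s', sInf (S i) ≤ sSup (S i) := fun i hi =>
    Set.nonempty_Icc.mp (hIcc i hi ▸ hne i hi)
  -- the key computation: the coefficients whose interval has right endpoint β sum to zero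
  have key : ∀ β : ℝ, ∑ i ∈ s'.filter (fun i => sSup (S i) = β), c i = 0 := by
    intro β
    set E : Finset ℝ :=
      ((s'.image (fun i => sInf (S i)) ∪ s'.image (fun i => sSup (S i))).filter
        (fun x => β < x)) ∪ {β + 1} with hE
    have hEne : E.Nonempty := ⟨β + 1, by simp [hE]⟩
    have hEβ : ∀ x ∈ E, β < x := by
      intro x hx
      rw [hE] at hx
      rcases Finset.mem_union.mp hx with h | h
      · exact (Finset.mem_filter.mp h).2
      · have : x = β + 1 := Finset.mem_singleton.mp h
        linarith
    set m := E.min' hEne with hm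
    have hβm : β < m := hEβ _ (E.min'_mem hEne)
    set t := (β + m) / 2 with ht
    have hβt : β < t := by rw [ht]; linarith
    have htm : t < m := by rw [ht]; linarith
    have hminf : ∀ i ∈ s', β < sInf (S i) → m ≤ sInf (S i) := by
      intro i hi h
      apply E.min'_le
      rw [hE]
      exact Finset.mem_union_left _ (Finset.mem_filter.mpr
        ⟨Finset.mem_union_left _ (Finset.mem_image_of_mem _ hi), h⟩)
    have hmsup : ∀ i ∈ s', β < sSup (S i) → m ≤ sSup (S i) := by
      intro i hi h
      apply E.min'_le
      rw [hE]
      exact Finset.mem_union_left _ (Finset.mem_filter.mpr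
        ⟨Finset.mem_union_right _ (Finset.mem_image_of_mem _ hi), h⟩)
    have hsum : ∑ i ∈ s, c i * ((S i).indicator 1 β - (S i).indicator 1 t) = 0 := by
      simp only [mul_sub, Finset.sum_sub_distrib, hzero β, hzero t, sub_zero]
    have hsum' : ∑ i ∈ s', c i * ((S i).indicator 1 β - (S i).indicator 1 t) = 0 := by
      rw [← hsum]
      apply Finset.sum_subset hsub
      intro i hi hni
      have hie : ¬ (S i).Nonempty := by
        intro h
        exact hni (Finset.mem_filter.mpr ⟨hi, h⟩)
      rw [Set.not_nonempty_iff_eq_empty.mp hie]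
      simp
    have hterm : ∀ i ∈ s', c i * ((S i).indicator 1 β - (S i).indicator 1 t)
        = if sSup (S i) = β then c i else 0 := by
      intro i hi
      have hd : (S i).indicator (1 : ℝ → ℤ) β - (S i).indicator 1 t
          = if sSup (S i) = β then 1 else 0 := by
        by_cases hb : sSup (S i) = β
        · rw [if_pos hb]
          have h1 : β ∈ S i := by
            rw [hIcc i hi]
            exact Set.mem_Icc.mpr ⟨hb ▸ hab i hi, hb.ge⟩
          have h2 : t ∉ S i := by
            rw [hIcc i hi]
            intro h
            have := (Set.mem_Icc.mp h).2
            rw [hb] at this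
            linarith
          simp [Set.indicator_of_mem h1, Set.indicator_of_notMem h2]
        · rw [if_neg hb]
          have hsame : (β ∈ S i) ↔ (t ∈ S i) := by
            rw [hIcc i hi]
            simp only [Set.mem_Icc]
            constructor
            · rintro ⟨h1, h2⟩
              have hβb : β < sSup (S i) := lt_of_le_of_ne h2 (fun h => hb h.symm)
              exact ⟨h1.trans hβt.le, htm.le.trans (hmsup i hi hβb)⟩
            · rintro ⟨h1, h2⟩
              constructor
              · by_contra h
                push_neg at h
                have := hminf i hi h
                linarith
              · linarith [hβt.trans_le h2]
          by_cases hβ : β ∈ S i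
          · simp [Set.indicator_of_mem hβ, Set.indicator_of_mem (hsame.mp hβ)]
          · simp [Set.indicator_of_notMem hβ,
              Set.indicator_of_notMem (fun h => hβ (hsame.mpr h))]
      rw [hd]
      by_cases hb : sSup (S i) = β <;> simp [hb]
    calc ∑ i ∈ s'.filter (fun i => sSup (S i) = β), c i
        = ∑ i ∈ s', if sSup (S i) = β then c i else 0 := Finset.sum_filter _ _
      _ = ∑ i ∈ s', c i * ((S i).indicator 1 β - (S i).indicator 1 t) :=
          Finset.sum_congr rfl fun i hi => (hterm i hi).symm
      _ = 0 := hsum'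
  -- sum over fibers of the right-endpoint map
  have := Finset.sum_fiberwise_of_maps_to
    (g := fun i => sSup (S i)) (t := s'.image (fun i => sSup (S i)))
    (fun i hi => Finset.mem_image_of_mem _ hi) c
  rw [← this]
  exact Finset.sum_eq_zero fun β _ => key β


theorem eulerKey_prod {V : Type*} [NormedAddCommGroup V] [NormedSpace ℝ V]
    (hV : EulerKey V) : EulerKey (V × ℝ) := by
  classical
  intro ι s c X hcomp hconv hzero
  set Y : ι → Set V := fun i => Prod.fst '' X i with hY
  have hYcomp : ∀ i ∈ s, IsCompact (Y i) := fun i hi => (hcomp i hi).image continuous_fst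
  have hYconv : ∀ i ∈ s, Convex ℝ (Y i) := fun i hi =>
    (hconv i hi).linear_image (LinearMap.fst ℝ V ℝ)
  have hYzero : ∀ y : V, ∑ i ∈ s, c i * (Y i).indicator 1 y = 0 := by
    intro y
    set S : ι → Set ℝ := fun i => {t : ℝ | (y, t) ∈ X i} with hS
    have hSeq : ∀ i, S i = Prod.snd '' (X i ∩ Prod.fst ⁻¹' {y}) := by
      intro i
      ext u
      constructor
      · intro h
        exact ⟨(y, u), ⟨h, rfl⟩, rfl⟩
      · rintro ⟨⟨p₁, p₂⟩, ⟨hp, hp1⟩, rfl⟩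
        have h1 : p₁ = y := hp1
        rwa [hS, Set.mem_setOf_eq, ← h1]
    have hScomp : ∀ i ∈ s, IsCompact (S i) := by
      intro i hi
      rw [hSeq i]
      exact (((hcomp i hi).inter_right
        (isClosed_singleton.preimage continuous_fst)).image continuous_snd)
    have hSconv : ∀ i ∈ s, Convex ℝ (S i) := by
      intro i hi
      intro t₁ ht₁ t₂ ht₂ p q hp hq hpq
      have hmem := hconv i hi ht₁ ht₂ hp hq hpq
      have hpt : p • ((y, t₁) : V × ℝ) + q • (y, t₂) = (y, p • t₁ + q • t₂) := by
        rw [Prod.smul_mk, Prod.smul_mk, Prod.mk_add_mk]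
        congr 1
        rw [← add_smul, hpq, one_smul]
      rw [hpt] at hmem
      exact hmem
    have h0 : ∀ u : ℝ, ∑ i ∈ s, c i * (S i).indicator 1 u = 0 := by
      intro u
      refine Eq.trans ?_ (hzero (y, u))
      apply Finset.sum_congr rfl
      intro i _
      congr 1
    have hχ := eulerKey_real ι s c S hScomp hSconv h0
    refine Eq.trans ?_ hχ
    apply Finset.sum_congr rfl
    intro i _
    congr 1
    by_cases hy : y ∈ Y i
    · have hne : (S i).Nonempty := by
        obtain ⟨p, hp, hpy⟩ := id hy
        refine ⟨p.2, ?_⟩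
        rw [hS]
        simp only [Set.mem_setOf_eq, ← hpy, Prod.mk.eta]
        exact hp
      simp [Set.indicator_of_mem hy, hne]
    · have hne : ¬ (S i).Nonempty := by
        rintro ⟨u, hu⟩
        exact hy ⟨(y, u), hu, rfl⟩
      simp [Set.indicator_of_notMem hy, hne]
  have hχ := hV ι s c Y hYcomp hYconv hYzero
  refine Eq.trans ?_ hχ
  apply Finset.sum_congr rfl
  intro i _
  congr 1
  simp only [hY, Set.image_nonempty]

theorem eulerKey_congr {V W : Type*} [NormedAddCommGroup V] [NormedSpace ℝ V]
    [NormedAddCommGroup W] [NormedSpace ℝ W] (e : V ≃L[ℝ] W) (hV : EulerKey V) :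
    EulerKey W := by
  classical
  intro ι s c X hcomp hconv hzero
  set X' : ι → Set V := fun i => (⇑e) ⁻¹' X i with hX'
  have himg : ∀ i, X' i = ⇑e.symm '' X i := by
    intro i
    ext v
    constructor
    · intro h
      exact ⟨e v, h, by simp⟩
    · rintro ⟨w, hw, rfl⟩
      simp only [hX', Set.mem_preimage, e.apply_symm_apply]
      exact hw
  have hcomp' : ∀ i ∈ s, IsCompact (X' i) := by
    intro i hi
    rw [himg i]
    exact (hcomp i hi).image e.symm.continuous
  have hconv' : ∀ i ∈ s, Convex ℝ (X' i) := by
    intro i hi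
    intro v₁ h₁ v₂ h₂ p q hp hq hpq
    have := hconv i hi h₁ h₂ hp hq hpq
    simp only [hX', Set.mem_preimage, map_add, map_smul]
    exact this
  have hzero' : ∀ v : V, ∑ i ∈ s, c i * (X' i).indicator 1 v = 0 := by
    intro v
    refine Eq.trans ?_ (hzero (e v))
    apply Finset.sum_congr rfl
    intro i _
    congr 1
  have hχ := hV ι s c X' hcomp' hconv' hzero'
  refine Eq.trans ?_ hχ
  apply Finset.sum_congr rfl
  intro i _
  congr 1
  have hiff : (X' i).Nonempty ↔ (X i).Nonempty := by
    rw [hX']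
    exact e.surjective.nonempty_preimage
  simp [hiff]

theorem eulerKey_pi : ∀ n : ℕ, EulerKey (Fin n → ℝ) := by
  intro n
  induction n with
  | zero =>
    have hsub : Subsingleton (Fin 0 → ℝ) := ⟨fun a b => funext fun i => i.elim0⟩
    intro ι s c X hcomp hconv hzero
    refine Eq.trans ?_ (hzero 0)
    apply Finset.sum_congr rfl
    intro i _
    congr 1
    by_cases hne : (X i).Nonempty
    · obtain ⟨x, hx⟩ := id hne
      have h0 : ∀ v : Fin 0 → ℝ, v ∈ X i := fun v => by rwa [Subsingleton.elim v x]
      simp [Set.indicator_of_mem (h0 _), hne]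
    · simp [Set.not_nonempty_iff_eq_empty.mp hne]
  | succ n ih =>
    have hprod : EulerKey ((Fin n → ℝ) × ℝ) := eulerKey_prod ih
    have e : (Fin (n + 1) → ℝ) ≃L[ℝ] ((Fin n → ℝ) × ℝ) :=
      ContinuousLinearEquiv.ofFinrankEq (by
        rw [Module.finrank_prod]
        simp)
    exact eulerKey_congr e.symm hprod

theorem eulerKey_all (V : Type*) [NormedAddCommGroup V] [NormedSpace ℝ V]
    [FiniteDimensional ℝ V] : EulerKey V := by
  have e : (Fin (Module.finrank ℝ V) → ℝ) ≃L[ℝ] V :=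
    ContinuousLinearEquiv.ofFinrankEq (by simp)
  exact eulerKey_congr e (eulerKey_pi _)

/-- The subgroup of `V → ℤ` generated by indicator functions of nonempty compact
convex subsets of `V`. -/
def eulerGroup (V : Type*) [NormedAddCommGroup V] [NormedSpace ℝ V] : AddSubgroup (V → ℤ) :=
  AddSubgroup.closure
    {f : V → ℤ | ∃ X : Set V, X.Nonempty ∧ IsCompact X ∧ Convex ℝ X ∧ f = X.indicator 1}

/-- The generating set of `eulerGroup`. -/
def eulerGens (V : Type*) [NormedAddCommGroup V] [NormedSpace ℝ V] : Set (V → ℤ) :=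
  {f : V → ℤ | ∃ X : Set V, X.Nonempty ∧ IsCompact X ∧ Convex ℝ X ∧ f = X.indicator 1}

lemma eulerGroup_eq (V : Type*) [NormedAddCommGroup V] [NormedSpace ℝ V] :
    eulerGroup V = (Submodule.span ℤ (eulerGens V)).toAddSubgroup :=
  (Submodule.span_int_eq_addSubgroupClosure _).symm

/-- Well-definedness of the coefficient sum. -/
lemma euler_sum_eq {V : Type*} [NormedAddCommGroup V] [NormedSpace ℝ V]
    [FiniteDimensional ℝ V] {κ₁ κ₂ : Type} [Fintype κ₁] [Fintype κ₂]
    (cf : κ₁ → ℤ) (g : κ₁ → eulerGens V) (df : κ₂ → ℤ) (h : κ₂ → eulerGens V)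
    (heq : ∑ i, cf i • (g i : V → ℤ) = ∑ j, df j • (h j : V → ℤ)) :
    ∑ i, cf i = ∑ j, df j := by
  classical
  have hg : ∀ i, ∃ X : Set V, X.Nonempty ∧ IsCompact X ∧ Convex ℝ X ∧
      (g i : V → ℤ) = X.indicator 1 := fun i => (g i).2
  have hh : ∀ j, ∃ X : Set V, X.Nonempty ∧ IsCompact X ∧ Convex ℝ X ∧
      (h j : V → ℤ) = X.indicator 1 := fun j => (h j).2
  choose Xg hg1 hg2 hg3 hg4 using hg
  choose Xh hh1 hh2 hh3 hh4 using hh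
  have key := eulerKey_all V (κ₁ ⊕ κ₂) Finset.univ (Sum.elim cf (fun j => - df j))
    (Sum.elim Xg Xh) ?_ ?_ ?_
  · have hform : ∑ k : κ₁ ⊕ κ₂, (Sum.elim cf (fun j => - df j)) k *
        (if (Sum.elim Xg Xh k).Nonempty then 1 else 0)
        = ∑ k : κ₁ ⊕ κ₂, (Sum.elim cf (fun j => - df j)) k := by
      apply Finset.sum_congr rfl
      rintro (i | j) _
      · simp [hg1 i]
      · simp [hh1 j]
    rw [hform, Fintype.sum_sum_type] at key
    simp only [Sum.elim_inl, Sum.elim_inr, Finset.sum_neg_distrib] at key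
    omega
  · rintro (i | j) _
    · exact hg2 i
    · exact hh2 j
  · rintro (i | j) _
    · exact hg3 i
    · exact hh3 j
  · intro v
    rw [Fintype.sum_sum_type]
    have hv := congrFun heq v
    simp only [Finset.sum_apply, Pi.smul_apply, smul_eq_mul] at hv
    simp only [Sum.elim_inl, Sum.elim_inr]
    have e1 : ∀ i, (Xg i).indicator (1 : V → ℤ) v = (g i : V → ℤ) v := fun i => by
      rw [hg4 i]
    have e2 : ∀ j, (Xh j).indicator (1 : V → ℤ) v = (h j : V → ℤ) v := fun j => by
      rw [hh4 j]
    calc ∑ i, cf i * (Xg i).indicator 1 v + ∑ j, (- df j) * (Xh j).indicator 1 v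
        = ∑ i, cf i * (g i : V → ℤ) v - ∑ j, df j * (h j : V → ℤ) v := by
          simp only [e1, e2, neg_mul, Finset.sum_neg_distrib, sub_eq_add_neg]
      _ = 0 := by rw [hv, sub_self]

/-- **Existence and uniqueness of the Euler integral.**
There is a unique group homomorphism from the subgroup of `V → ℤ` generated by
indicators of nonempty compact convex sets to `ℤ` sending each such indicator to `1`. -/
theorem euler_integral_exists_unique
    (V : Type*) [NormedAddCommGroup V] [NormedSpace ℝ V] [FiniteDimensional ℝ V] :
    ∃! I : eulerGroup V →+ ℤ,
      ∀ (X : Set V), X.Nonempty → IsCompact X → Convex ℝ X →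
        ∀ hmem : (X.indicator 1 : V → ℤ) ∈ eulerGroup V,
          I ⟨X.indicator 1, hmem⟩ = 1 := by
  classical
  have hmem_span : ∀ f : V → ℤ, f ∈ eulerGroup V → f ∈ Submodule.span ℤ (eulerGens V) := by
    intro f hf
    rwa [eulerGroup_eq, Submodule.mem_toAddSubgroup] at hf
  have rep : ∀ f : eulerGroup V, ∃ p : Σ n : ℕ, (Fin n → ℤ) × (Fin n → eulerGens V),
      ∑ i, (p.2.1 i) • ((p.2.2 i : V → ℤ)) = (f : V → ℤ) := by
    intro f
    obtain ⟨n, cf, g, hsum⟩ := Submodule.mem_span_set'.mp (hmem_span f f.2)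
    exact ⟨⟨n, cf, g⟩, hsum⟩
  choose rp hrp using rep
  set Ifun : eulerGroup V → ℤ := fun f => ∑ i, (rp f).2.1 i with hIfun
  have hadd : ∀ f g : eulerGroup V, Ifun (f + g) = Ifun f + Ifun g := by
    intro f g
    set cc : Fin (rp f).1 ⊕ Fin (rp g).1 → ℤ := Sum.elim (rp f).2.1 (rp g).2.1 with hcc
    set gg : Fin (rp f).1 ⊕ Fin (rp g).1 → eulerGens V :=
      Sum.elim (rp f).2.2 (rp g).2.2 with hgg
    have hcomb : ∑ k, cc k • (gg k : V → ℤ) = ((f + g : eulerGroup V) : V → ℤ) := by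
      rw [Fintype.sum_sum_type]
      simp only [hcc, hgg, Sum.elim_inl, Sum.elim_inr]
      rw [hrp f, hrp g]
      rfl
    have hkey := euler_sum_eq (rp (f + g)).2.1 (rp (f + g)).2.2 cc gg
      (by rw [hrp (f + g), ← hcomb])
    simp only [hIfun]
    rw [hkey, Fintype.sum_sum_type]
    simp [hcc]
  set I : eulerGroup V →+ ℤ := AddMonoidHom.mk' Ifun hadd with hI
  have hspec : ∀ (X : Set V), X.Nonempty → IsCompact X → Convex ℝ X →
      ∀ hmem : (X.indicator 1 : V → ℤ) ∈ eulerGroup V, I ⟨X.indicator 1, hmem⟩ = 1 := by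
    intro X hX hXc hXv hmem
    have hgen : (X.indicator 1 : V → ℤ) ∈ eulerGens V := ⟨X, hX, hXc, hXv, rfl⟩
    have hone : ∑ _i : Fin 1, (1 : ℤ) •
        (((fun _ => (⟨X.indicator 1, hgen⟩ : eulerGens V)) _i : eulerGens V) : V → ℤ)
        = ((⟨X.indicator 1, hmem⟩ : eulerGroup V) : V → ℤ) := by simp
    have hkey := euler_sum_eq (rp ⟨X.indicator 1, hmem⟩).2.1 (rp ⟨X.indicator 1, hmem⟩).2.2
      (fun _ : Fin 1 => (1 : ℤ)) (fun _ => (⟨X.indicator 1, hgen⟩ : eulerGens V))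
      (by rw [hrp ⟨X.indicator 1, hmem⟩]; exact hone.symm)
    show Ifun ⟨X.indicator 1, hmem⟩ = 1
    simp only [hIfun]
    rw [hkey]
    simp
  refine ⟨I, hspec, ?_⟩
  intro J hJ
  have huniq : ∀ (x : V → ℤ) (hx : x ∈ AddSubgroup.closure (eulerGens V)),
      J ⟨x, hx⟩ = I ⟨x, hx⟩ := by
    intro x hx
    refine AddSubgroup.closure_induction ?_ ?_ ?_ ?_ hx
    · rintro y ⟨X, hX, hXc, hXv, rfl⟩
      exact (hJ X hX hXc hXv _).trans (hspec X hX hXc hXv _).symm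
    · exact (map_zero J).trans (map_zero I).symm
    · intro a b ha hb iha ihb
      have hab : (⟨a + b, add_mem ha hb⟩ : eulerGroup V) = ⟨a, ha⟩ + ⟨b, hb⟩ := rfl
      rw [hab, map_add, map_add, iha, ihb]
    · intro a ha iha
      have hna : (⟨-a, neg_mem ha⟩ : eulerGroup V) = -⟨a, ha⟩ := rfl
      rw [hna, map_neg, map_neg, iha]
  refine AddMonoidHom.ext fun f => ?_
  obtain ⟨x, hx⟩ := f
  exact huniq x hx
end

section
/- Let V be a finite-dimensional real normed vector space and let φ : V → ℤ be a PL-constructible function with compact support. Then φ can be written as a finite sum φ = Σ_{α∈A} C_α·1_{X_α}, where A is a finite index set, each X_α is a compact convex polytope (the convex hull of a nonempty finite subset of V), and each C_α ∈ ℤ is nonzero. -/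
/-- A locally closed convex polytope: a finite intersection of open or closed affine
half-spaces, i.e. sets `{v | f v < c}` or `{v | f v ≤ c}` for linear functionals `f`. -/
def IsLocallyClosedPolytope {V : Type*} [NormedAddCommGroup V] [NormedSpace ℝ V]
    (P : Set V) : Prop :=
  ∃ (k : ℕ) (f : Fin k → (V →ₗ[ℝ] ℝ)) (c : Fin k → ℝ) (strict : Fin k → Bool),
    P = ⋂ j, (if strict j then {v : V | f j v < c j} else {v : V | f j v ≤ c j})

/-- A function `φ : V → ℤ` is PL-constructible if there is a locally finite covering of
`V` by locally closed convex polytopes on each of which `φ` is constant. -/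
def IsPLConstructible {V : Type*} [NormedAddCommGroup V] [NormedSpace ℝ V]
    (φ : V → ℤ) : Prop :=
  ∃ (ι : Type) (P : ι → Set V),
    (∀ a, IsLocallyClosedPolytope (P a)) ∧
    (⋃ a, P a) = Set.univ ∧
    LocallyFinite P ∧
    ∀ a, ∀ x ∈ P a, ∀ y ∈ P a, φ x = φ y

section Auxiliary

open Set Finset

variable {V : Type*} [NormedAddCommGroup V] [NormedSpace ℝ V]


open Set Finset

variable {V : Type*} [NormedAddCommGroup V] [NormedSpace ℝ V]

/-- Point where the segment from `s` to `u` crosses `{f = c}`. -/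
noncomputable def cutPoint (f : V →ₗ[ℝ] ℝ) (c : ℝ) (s u : V) : V :=
  ((f u - c) / (f u - f s)) • s + ((c - f s) / (f u - f s)) • u

theorem convexHull_inter_halfspace (S : Finset V) (f : V →ₗ[ℝ] ℝ) (c : ℝ) :
    ∃ T : Finset V,
      convexHull ℝ (T : Set V) = convexHull ℝ (S : Set V) ∩ {v | f v ≤ c} := by
  classical
  set S1 := S.filter (fun s => f s ≤ c) with hS1def
  set S2 := S.filter (fun s => ¬ f s ≤ c) with hS2def
  have hS1f : ∀ s ∈ S1, f s ≤ c := fun s hs => (Finset.mem_filter.1 hs).2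
  have hS2f : ∀ u ∈ S2, c < f u := fun u hu =>
    lt_of_not_ge (Finset.mem_filter.1 hu).2
  have hS1S : ∀ s ∈ S1, s ∈ S := fun s hs => (Finset.mem_filter.1 hs).1
  have hS2S : ∀ u ∈ S2, u ∈ S := fun u hu => (Finset.mem_filter.1 hu).1
  have hd : ∀ s ∈ S1, ∀ u ∈ S2, 0 < f u - f s := fun s hs u hu =>
    sub_pos.2 (lt_of_le_of_lt (hS1f s hs) (hS2f u hu))
  refine ⟨S1 ∪ (S1 ×ˢ S2).image (fun q => cutPoint f c q.1 q.2), ?_⟩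
  set T := S1 ∪ (S1 ×ˢ S2).image (fun q => cutPoint f c q.1 q.2) with hTdef
  have hS1T : ∀ s ∈ S1, s ∈ T := fun s hs => Finset.mem_union_left _ hs
  have hcutT : ∀ s ∈ S1, ∀ u ∈ S2, cutPoint f c s u ∈ T := by
    intro s hs u hu
    exact Finset.mem_union_right _ (Finset.mem_image.2 ⟨(s, u),
      Finset.mem_product.2 ⟨hs, hu⟩, rfl⟩)
  have hcut_hull : ∀ s ∈ S1, ∀ u ∈ S2, cutPoint f c s u ∈ convexHull ℝ (S : Set V) := by
    intro s hs u hu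
    have hd' := hd s hs u hu
    have h1 : (0:ℝ) ≤ (f u - c) / (f u - f s) :=
      div_nonneg (sub_nonneg.2 (hS2f u hu).le) hd'.le
    have h2 : (0:ℝ) ≤ (c - f s) / (f u - f s) :=
      div_nonneg (sub_nonneg.2 (hS1f s hs)) hd'.le
    have h3 : (f u - c) / (f u - f s) + (c - f s) / (f u - f s) = 1 := by
      field_simp
      ring
    exact (convex_convexHull ℝ (S : Set V))
      (subset_convexHull ℝ _ (Finset.mem_coe.2 (hS1S s hs)))
      (subset_convexHull ℝ _ (Finset.mem_coe.2 (hS2S u hu))) h1 h2 h3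
  have hcut_f : ∀ s ∈ S1, ∀ u ∈ S2, f (cutPoint f c s u) = c := by
    intro s hs u hu
    have hd' := (hd s hs u hu).ne'
    simp only [cutPoint, map_add, map_smul, smul_eq_mul]
    field_simp
    ring
  apply Set.Subset.antisymm
  · apply convexHull_min
    · intro v hv
      rw [hTdef] at hv
      simp only [Finset.coe_union, Finset.coe_image, Set.mem_union, Finset.mem_coe,
        Set.mem_image] at hv
      rcases hv with hv | ⟨q, hq, rfl⟩
      · exact ⟨subset_convexHull ℝ _ (Finset.mem_coe.2 (hS1S v hv)), hS1f v hv⟩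
      · rw [Finset.mem_product] at hq
        exact ⟨hcut_hull q.1 hq.1 q.2 hq.2, le_of_eq (hcut_f q.1 hq.1 q.2 hq.2)⟩
    · exact (convex_convexHull ℝ _).inter (convex_halfSpace_le f.isLinear c)
  · rintro x ⟨hx1, hx2⟩
    rw [Set.mem_setOf_eq] at hx2
    rw [Finset.convexHull_eq, Set.mem_setOf_eq] at hx1
    obtain ⟨w, hw0, hw1, hwx⟩ := hx1
    rw [Finset.centerMass_eq_of_sum_1 _ _ hw1] at hwx
    simp only [id_eq] at hwx
    set F1 := ∑ s ∈ S1, w s * f s with hF1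
    set F2 := ∑ u ∈ S2, w u * f u with hF2
    set t1 := ∑ s ∈ S1, w s with ht1def
    set t2 := ∑ u ∈ S2, w u with ht2def
    set Ecut := ∑ s ∈ S1, w s * (c - f s) with hEcutdef
    have hsplit_sum : t1 + t2 = 1 := by
      rw [ht1def, ht2def, hS1def, hS2def, Finset.sum_filter_add_sum_filter_not, hw1]
    have hsplit_x : (∑ s ∈ S1, w s • s) + (∑ u ∈ S2, w u • u) = x := by
      rw [hS1def, hS2def, Finset.sum_filter_add_sum_filter_not, hwx]
    have hfx : F1 + F2 = f x := by
      rw [← hsplit_x, map_add, map_sum, map_sum]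
      simp only [map_smul, smul_eq_mul]
      rfl
    have hEc : Ecut = t1 * c - F1 := by
      rw [hEcutdef, ht1def, hF1, Finset.sum_mul, ← Finset.sum_sub_distrib]
      exact Finset.sum_congr rfl fun s _ => by ring
    have hF2c : ∑ u ∈ S2, w u * (f u - c) = F2 - t2 * c := by
      rw [hF2, ht2def, Finset.sum_mul, ← Finset.sum_sub_distrib]
      exact Finset.sum_congr rfl fun u _ => by ring
    have hEnn : 0 ≤ Ecut :=
      Finset.sum_nonneg fun s hs =>
        mul_nonneg (hw0 s (hS1S s hs)) (sub_nonneg.2 (hS1f s hs))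
    rcases hEnn.eq_or_lt with heq | hpos
    · -- Ecut = 0 : all the mass is on S1
      have hG2 : ∑ u ∈ S2, w u * (f u - c) = 0 := by
        have ht2c : t2 * c = c - t1 * c := by
          have h12 : t2 = 1 - t1 := by linarith
          rw [h12]; ring
        have hle : F2 - t2 * c ≤ 0 := by linarith [hfx, hEc, hx2, heq, ht2c]
        have h0le : 0 ≤ ∑ u ∈ S2, w u * (f u - c) :=
          Finset.sum_nonneg fun u hu =>
            mul_nonneg (hw0 u (hS2S u hu)) (sub_nonneg.2 (hS2f u hu).le)
        rw [hF2c] at h0le ⊢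
        exact le_antisymm hle h0le
      have hw2 : ∀ u ∈ S2, w u = 0 := by
        intro u hu
        have := (Finset.sum_eq_zero_iff_of_nonneg fun u hu =>
          mul_nonneg (hw0 u (hS2S u hu)) (sub_nonneg.2 (hS2f u hu).le)).1 hG2 u hu
        rcases mul_eq_zero.1 this with h | h
        · exact h
        · exact absurd h (sub_ne_zero.2 (hS2f u hu).ne')
      have ht2z : t2 = 0 := Finset.sum_eq_zero hw2
      have ht1 : t1 = 1 := by linarith [hsplit_sum]
      have h2z : ∑ u ∈ S2, w u • u = 0 :=
        Finset.sum_eq_zero fun u hu => by rw [hw2 u hu, zero_smul]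
      have hx' : ∑ s ∈ S1, w s • s = x := by
        rw [← hsplit_x, h2z, add_zero]
      have hmem := S1.centerMass_mem_convexHull (w := w)
        (fun s hs => hw0 s (hS1S s hs)) (by rw [← ht1def, ht1]; norm_num)
        (z := id) (fun s hs => Finset.mem_coe.2 (hS1T s hs))
      rw [Finset.centerMass_eq_of_sum_1 _ _ (by rw [← ht1def, ht1])] at hmem
      simp only [id_eq] at hmem
      rwa [hx'] at hmem
    · -- Ecut > 0
      set tt := S1.disjSum (S1 ×ˢ S2) with httdef
      set W : V ⊕ (V × V) → ℝ :=
        Sum.elim (fun s => w s * (c - f x)) (fun q => w q.1 * w q.2 * (f q.2 - f q.1)) with hWdef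
      set z : V ⊕ (V × V) → V := Sum.elim id (fun q => cutPoint f c q.1 q.2) with hzdef
      have hW0 : ∀ i ∈ tt, 0 ≤ W i := by
        intro i hi
        rw [httdef, Finset.mem_disjSum] at hi
        rcases hi with ⟨a, ha, rfl⟩ | ⟨b, hb, rfl⟩
        · exact mul_nonneg (hw0 a (hS1S a ha)) (sub_nonneg.2 hx2)
        · rw [Finset.mem_product] at hb
          exact mul_nonneg (mul_nonneg (hw0 _ (hS1S _ hb.1)) (hw0 _ (hS2S _ hb.2)))
            (hd _ hb.1 _ hb.2).le
      have hWsum : ∑ i ∈ tt, W i = Ecut := by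
        rw [httdef, hWdef, Finset.sum_sumElim]
        have e1 : ∑ s ∈ S1, w s * (c - f x) = t1 * (c - f x) := by
          rw [ht1def, ← Finset.sum_mul]
        have e2 : ∑ q ∈ S1 ×ˢ S2, w q.1 * w q.2 * (f q.2 - f q.1)
            = t1 * F2 - F1 * t2 := by
          rw [Finset.sum_product]
          have einner : ∀ s ∈ S1, ∑ u ∈ S2, w s * w u * (f u - f s)
              = w s * F2 - w s * f s * t2 := by
            intro s _
            rw [hF2, ht2def, Finset.mul_sum, Finset.mul_sum, ← Finset.sum_sub_distrib]
            exact Finset.sum_congr rfl fun u _ => by ring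
          rw [Finset.sum_congr rfl einner, Finset.sum_sub_distrib,
            ← Finset.sum_mul, ← Finset.sum_mul, ← ht1def, ← hF1]
        rw [e1, e2]
        linear_combination t1 * hfx - F1 * hsplit_sum - hEc
      have hzT : ∀ i ∈ tt, z i ∈ (T : Set V) := by
        intro i hi
        rw [httdef, Finset.mem_disjSum] at hi
        rcases hi with ⟨a, ha, rfl⟩ | ⟨b, hb, rfl⟩
        · exact Finset.mem_coe.2 (hS1T a ha)
        · rw [Finset.mem_product] at hb
          exact Finset.mem_coe.2 (hcutT _ hb.1 _ hb.2)
      have hmem := tt.centerMass_mem_convexHull hW0 (hWsum ▸ hpos) hzT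
      have hnum : ∑ i ∈ tt, W i • z i = Ecut • x := by
        rw [httdef, hWdef, hzdef]
        rw [show (∑ i ∈ S1.disjSum (S1 ×ˢ S2),
            Sum.elim (fun s => w s * (c - f x)) (fun q => w q.1 * w q.2 * (f q.2 - f q.1)) i •
              Sum.elim id (fun q => cutPoint f c q.1 q.2) i)
          = ∑ i ∈ S1.disjSum (S1 ×ˢ S2),
              Sum.elim (fun s => (w s * (c - f x)) • s)
                (fun q => (w q.1 * w q.2 * (f q.2 - f q.1)) • cutPoint f c q.1 q.2) i from
          Finset.sum_congr rfl fun i _ => by cases i <;> rfl]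
        rw [Finset.sum_sumElim]
        have e3 : ∀ q ∈ S1 ×ˢ S2, (w q.1 * w q.2 * (f q.2 - f q.1)) • cutPoint f c q.1 q.2
            = (w q.1 * (w q.2 * (f q.2 - c))) • q.1 + (w q.1 * (c - f q.1) * w q.2) • q.2 := by
          rintro ⟨s, u⟩ hq
          rw [Finset.mem_product] at hq
          have hd' := (hd s hq.1 u hq.2).ne'
          simp only [cutPoint, smul_add, smul_smul]
          congr 1
          · congr 1
            field_simp
          · congr 1
            field_simp
        rw [Finset.sum_congr rfl e3, Finset.sum_add_distrib]
        have e4 : ∑ q ∈ S1 ×ˢ S2, (w q.1 * (w q.2 * (f q.2 - c))) • q.1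
            = ∑ s ∈ S1, (w s * (F2 - t2 * c)) • s := by
          rw [Finset.sum_product]
          refine Finset.sum_congr rfl fun s _ => ?_
          rw [← Finset.sum_smul]
          congr 1
          have hr : ∀ i ∈ S2, w (s, i).1 * (w (s, i).2 * (f (s, i).2 - c))
              = w s * (w i * (f i - c)) := fun i _ => rfl
          rw [Finset.sum_congr rfl hr, ← Finset.mul_sum, hF2c]
        have e5 : ∑ q ∈ S1 ×ˢ S2, (w q.1 * (c - f q.1) * w q.2) • q.2
            = ∑ u ∈ S2, (Ecut * w u) • u := by
          rw [Finset.sum_product, Finset.sum_comm]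
          refine Finset.sum_congr rfl fun u _ => ?_
          rw [← Finset.sum_smul]
          congr 1
          have hr : ∀ i ∈ S1, w (i, u).1 * (c - f (i, u).1) * w (i, u).2
              = w i * (c - f i) * w u := fun i _ => rfl
          rw [Finset.sum_congr rfl hr, ← Finset.sum_mul, ← hEcutdef]
        rw [e4, e5, ← add_assoc, ← Finset.sum_add_distrib]
        have e6 : ∀ s ∈ S1, (w s * (c - f x)) • s + (w s * (F2 - t2 * c)) • s
            = (Ecut * w s) • s := by
          intro s _
          rw [← add_smul]
          congr 1
          have : f x = F1 + F2 := hfx.symm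
          linear_combination (-(w s)) * this - (w s) * hEc - (w s * c) * hsplit_sum
        rw [Finset.sum_congr rfl e6, ← hsplit_x, smul_add, Finset.smul_sum, Finset.smul_sum]
        congr 1 <;> exact Finset.sum_congr rfl fun v _ => by rw [smul_smul]
      have hcm : tt.centerMass W z = x := by
        rw [Finset.centerMass, hWsum, hnum, smul_smul, inv_mul_cancel₀ hpos.ne', one_smul]
      rwa [hcm] at hmem


/-- The three possible "sides" of a hyperplane `{f = c}`. -/
def sideSet (f : V →ₗ[ℝ] ℝ) (c : ℝ) (o : Fin 3) : Set V :=
  if o = 0 then {v | f v < c} else if o = 1 then {v | f v = c} else {v | c < f v}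

/-- The subgroup of `V → ℤ` generated by indicators of compact convex polytopes. -/
noncomputable def polyGens (V : Type*) [NormedAddCommGroup V] [NormedSpace ℝ V] :
    Submodule ℤ (V → ℤ) :=
  Submodule.span ℤ
    {g | ∃ S : Finset V, S.Nonempty ∧ g = (convexHull ℝ (S : Set V)).indicator 1}

theorem indicator_hull_mem (S : Finset V) :
    (convexHull ℝ (S : Set V)).indicator (1 : V → ℤ) ∈ polyGens V := by
  rcases S.eq_empty_or_nonempty with rfl | hS
  · simp only [Finset.coe_empty, convexHull_empty, Set.indicator_empty]
    exact Submodule.zero_mem _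
  · exact Submodule.subset_span ⟨S, hS, rfl⟩

theorem indicator_strict_eq (A R : Set V) (f : V →ₗ[ℝ] ℝ) (c : ℝ) :
    (A ∩ ({v | f v < c} ∩ R)).indicator (1 : V → ℤ)
      = (A ∩ {v | f v ≤ c} ∩ R).indicator 1
        - (A ∩ {v | f v ≤ c} ∩ {v | (-f) v ≤ -c} ∩ R).indicator 1 := by
  classical
  funext v
  simp only [Pi.sub_apply]
  rw [Set.indicator_apply, Set.indicator_apply, Set.indicator_apply]
  simp only [Set.mem_inter_iff, Set.mem_setOf_eq, LinearMap.neg_apply, neg_le_neg_iff]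
  rcases lt_trichotomy (f v) c with h | h | h
  · simp [h, le_of_lt h, not_le.2 h, and_assoc]
  · simp [h, and_assoc]
  · simp [not_lt.2 (le_of_lt h), not_le.2 h, and_assoc]

/-- Main induction: the indicator of a polytope cut by finitely many
open/closed/hyperplane constraints is in the span. -/
theorem indicator_cell_mem {κ : Type*} [DecidableEq κ] (t : Finset κ)
    (F : κ → (V →ₗ[ℝ] ℝ)) (C : κ → ℝ) (o : κ → Fin 3) :
    ∀ S : Finset V,
      ((convexHull ℝ (S : Set V)) ∩
        {v | ∀ j ∈ t, v ∈ sideSet (F j) (C j) (o j)}).indicator (1 : V → ℤ)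
      ∈ polyGens V := by
  induction t using Finset.induction_on with
  | empty =>
    intro S
    have : {v : V | ∀ j ∈ (∅ : Finset κ), v ∈ sideSet (F j) (C j) (o j)} = Set.univ := by
      ext v; simp
    rw [this, Set.inter_univ]
    exact indicator_hull_mem S
  | insert j t hj ih =>
    intro S
    have hset : {v : V | ∀ i ∈ insert j t, v ∈ sideSet (F i) (C i) (o i)}
        = sideSet (F j) (C j) (o j) ∩ {v | ∀ i ∈ t, v ∈ sideSet (F i) (C i) (o i)} := by
      ext v
      simp only [Finset.mem_insert, Set.mem_inter_iff, Set.mem_setOf_eq]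
      constructor
      · intro h; exact ⟨h j (Or.inl rfl), fun i hi => h i (Or.inr hi)⟩
      · rintro ⟨h1, h2⟩ i (rfl | hi)
        · exact h1
        · exact h2 i hi
    rw [hset]
    set R := {v : V | ∀ i ∈ t, v ∈ sideSet (F i) (C i) (o i)} with hR
    have h3 : o j = 0 ∨ o j = 1 ∨ o j = 2 := by
      rcases (o j) with ⟨n, hn⟩
      interval_cases n <;> simp [Fin.ext_iff]
    -- helper for both strict cases
    have hstrict : ∀ (f : V →ₗ[ℝ] ℝ) (c : ℝ),
        (convexHull ℝ (S : Set V) ∩ ({v | f v < c} ∩ R)).indicator (1 : V → ℤ)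
          ∈ polyGens V := by
      intro f c
      obtain ⟨T1, hT1⟩ := convexHull_inter_halfspace S f c
      obtain ⟨T2, hT2⟩ := convexHull_inter_halfspace T1 (-f) (-c)
      rw [indicator_strict_eq, ← hT1, ← hT2]
      exact sub_mem (ih T1) (ih T2)
    rcases h3 with h | h | h
    · -- strict less-than
      have : sideSet (F j) (C j) (o j) = {v | F j v < C j} := by rw [h, sideSet]; simp
      rw [this]
      exact hstrict (F j) (C j)
    · -- equality
      obtain ⟨T1, hT1⟩ := convexHull_inter_halfspace S (F j) (C j)
      obtain ⟨T2, hT2⟩ := convexHull_inter_halfspace T1 (-(F j)) (-(C j))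
      have hside : sideSet (F j) (C j) (o j) = {v | F j v = C j} := by
        rw [h, sideSet]; simp
      have hT2' : convexHull ℝ (T2 : Set V)
          = convexHull ℝ (S : Set V) ∩ {v | F j v = C j} := by
        rw [hT2, hT1]
        ext v
        simp only [Set.mem_inter_iff, Set.mem_setOf_eq, LinearMap.neg_apply, neg_le_neg_iff,
          and_assoc]
        constructor
        · rintro ⟨h1, h2, h3⟩; exact ⟨h1, le_antisymm h2 h3⟩
        · rintro ⟨h1, h2⟩; exact ⟨h1, h2.le, h2.ge⟩
      rw [hside, ← Set.inter_assoc, ← hT2']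
      exact ih T2
    · -- strictly greater
      have : sideSet (F j) (C j) (o j) = {v | (-(F j)) v < -(C j)} := by
        rw [h, sideSet]
        ext v
        simp
      rw [this]
      exact hstrict (-(F j)) (-(C j))


theorem exists_box [FiniteDimensional ℝ V] {K : Set V} (hK : IsCompact K) :
    ∃ S0 : Finset V, K ⊆ convexHull ℝ (S0 : Set V) := by
  classical
  set d := Module.finrank ℝ V with hd
  set b : Module.Basis (Fin d) ℝ V := Module.finBasis ℝ V with hb
  set e : V ≃ₗ[ℝ] (Fin d → ℝ) := b.equivFun with he
  have hcont : Continuous fun v : V => (e v : Fin d → ℝ) :=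
    LinearMap.continuous_of_finiteDimensional (e : V →ₗ[ℝ] (Fin d → ℝ))
  obtain ⟨M, hM⟩ := hK.exists_bound_of_continuousOn hcont.continuousOn
  set M' : ℝ := max M 0 with hM'def
  have hM'0 : 0 ≤ M' := le_max_right _ _
  set corners : Set (Fin d → ℝ) := Set.pi Set.univ fun _ => ({-M', M'} : Set ℝ)
    with hcorners
  have hfin : corners.Finite :=
    Set.Finite.pi fun _ => (Set.finite_singleton M').insert _
  have hhull : Set.pi Set.univ (fun _ : Fin d => Set.Icc (-M') M')
      ⊆ convexHull ℝ corners := by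
    rw [hcorners, convexHull_pi]
    intro x hx i hi
    rw [convexHull_pair, segment_eq_Icc (neg_le_self hM'0)]
    exact hx i hi
  refine ⟨(hfin.image e.symm).toFinset, fun v hv => ?_⟩
  have h1 : e v ∈ convexHull ℝ corners := by
    apply hhull
    intro i _
    have h2 := norm_le_pi_norm (e v) i
    have h3 := hM v hv
    rw [Real.norm_eq_abs] at h2
    have h4 : |e v i| ≤ M' := le_trans (h2.trans h3) (le_max_left _ _)
    rw [Set.mem_Icc]
    exact abs_le.1 h4
  have h5 : e.symm (e v) ∈ (e.symm : (Fin d → ℝ) →ₗ[ℝ] V) '' convexHull ℝ corners :=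
    Set.mem_image_of_mem _ h1
  rw [LinearMap.image_convexHull] at h5
  rw [Set.Finite.coe_toFinset]
  rw [e.symm_apply_apply] at h5
  exact h5

end Auxiliary

open Set Finset in
/-- **Decomposition of compactly supported PL-constructible functions.**
Any PL-constructible `φ : V → ℤ` with compact support is a finite integer combination of
indicator functions of compact convex polytopes (convex hulls of nonempty finite sets),
with nonzero coefficients. -/
theorem plConstructible_decomposition
    {V : Type*} [NormedAddCommGroup V] [NormedSpace ℝ V] [FiniteDimensional ℝ V]
    (φ : V → ℤ) (hφ : IsPLConstructible φ) (hsupp : HasCompactSupport φ) :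
    ∃ (n : ℕ) (C : Fin n → ℤ) (S : Fin n → Finset V),
      (∀ a, (S a).Nonempty) ∧ (∀ a, C a ≠ 0) ∧
      ∀ v : V, φ v = ∑ a, C a * (convexHull ℝ (S a : Set V)).indicator 1 v := by
  classical
  obtain ⟨ι, P, hpoly, hcover, hlf, hconst⟩ := hφ
  obtain ⟨S0, hS0⟩ := exists_box (hsupp : IsCompact (tsupport φ))
  set B : Set V := convexHull ℝ (S0 : Set V) with hBdef
  have hBcompact : IsCompact B := S0.finite_toSet.isCompact_convexHull (𝕜 := ℝ)
  have hRfin : {a : ι | (P a ∩ B).Nonempty}.Finite :=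
    hlf.finite_nonempty_inter_compact hBcompact
  choose k f c str hP using hpoly
  set A : Finset ι := hRfin.toFinset with hAdef
  let J := Σ a : {x // x ∈ A}, Fin (k a.1)
  let F : J → (V →ₗ[ℝ] ℝ) := fun j => f j.1.1 j.2
  let Cc : J → ℝ := fun j => c j.1.1 j.2
  let sgn : V → J → Fin 3 := fun v j =>
    if F j v < Cc j then 0 else if F j v = Cc j then 1 else 2
  let cell : (J → Fin 3) → Set V := fun σ => B ∩ {v | ∀ j, sgn v j = σ j}
  have hsgn_iff : ∀ (v : V) (j : J) (o : Fin 3),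
      sgn v j = o ↔ v ∈ sideSet (F j) (Cc j) o := by
    intro v j o
    have h3 : o = 0 ∨ o = 1 ∨ o = 2 := by
      rcases o with ⟨n, hn⟩
      interval_cases n <;> simp [Fin.ext_iff]
    rcases lt_trichotomy (F j v) (Cc j) with h | h | h
    · rcases h3 with rfl | rfl | rfl <;> simp [sgn, sideSet, h, h.ne, not_lt.2 h.le]
    · rcases h3 with rfl | rfl | rfl <;> simp [sgn, sideSet, h]
    · rcases h3 with rfl | rfl | rfl <;> simp [sgn, sideSet, lt_asymm h, h.ne', h]
  -- each cell is contained in any covering piece it meets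
  have hcell_sub : ∀ (σ : J → Fin 3) (a : ι), a ∈ A →
      ∀ x ∈ cell σ, x ∈ P a → ∀ y ∈ cell σ, y ∈ P a := by
    rintro σ a haA x ⟨hxB, hxs⟩ hxPa y ⟨hyB, hys⟩
    rw [hP a] at hxPa ⊢
    rw [Set.mem_iInter] at hxPa ⊢
    intro jj
    have hxj := hxPa jj
    set j : J := ⟨⟨a, haA⟩, jj⟩ with hjdef
    have hsxy : sgn x j = sgn y j := by rw [hxs j, hys j]
    cases hstr : str a jj with
    | true =>
      rw [hstr] at hxj
      rw [if_pos rfl] at hxj ⊢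
      have hx' : F j x < Cc j := hxj
      have hsx : sgn x j = 0 := by simp [sgn, hx']
      have hsy : sgn y j = 0 := by rw [← hsxy, hsx]
      have := (hsgn_iff y j 0).1 hsy
      simpa [sideSet] using this
    | false =>
      rw [hstr] at hxj
      rw [if_neg Bool.false_ne_true] at hxj ⊢
      have hx' : F j x ≤ Cc j := hxj
      rcases lt_or_eq_of_le hx' with hlt | heq
      · have hsx : sgn x j = 0 := by simp [sgn, hlt]
        have hsy : sgn y j = 0 := by rw [← hsxy, hsx]
        have := (hsgn_iff y j 0).1 hsy
        have h2 : F j y < Cc j := by simpa [sideSet] using this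
        exact h2.le
      · have hsx : sgn x j = 1 := by simp [sgn, heq, lt_irrefl, not_lt.2 heq.le]
        have hsy : sgn y j = 1 := by rw [← hsxy, hsx]
        have := (hsgn_iff y j 1).1 hsy
        have h2 : F j y = Cc j := by simpa [sideSet] using this
        exact h2.le
  have hconst_cell : ∀ σ, ∀ x ∈ cell σ, ∀ y ∈ cell σ, φ x = φ y := by
    intro σ x hx y hy
    have hx_cov : x ∈ ⋃ a, P a := by rw [hcover]; exact Set.mem_univ x
    obtain ⟨a, ha⟩ := Set.mem_iUnion.1 hx_cov
    have haA : a ∈ A := by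
      rw [hAdef, Set.Finite.mem_toFinset]
      exact ⟨x, ha, hx.1⟩
    have hyPa : y ∈ P a := hcell_sub σ a haA x hx ha y hy
    exact hconst a x ha y hyPa
  have hφB : ∀ v, v ∉ B → φ v = 0 := fun v hv =>
    image_eq_zero_of_notMem_tsupport fun h => hv (hS0 h)
  let val : (J → Fin 3) → ℤ := fun σ =>
    if h : (cell σ).Nonempty then φ h.some else 0
  have hsum : ∀ v, φ v = ∑ σ : J → Fin 3, val σ * (cell σ).indicator 1 v := by
    intro v
    by_cases hvB : v ∈ B
    · have hvcell : v ∈ cell (sgn v) := ⟨hvB, fun j => rfl⟩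
      rw [Finset.sum_eq_single (sgn v)]
      · rw [Set.indicator_of_mem hvcell, Pi.one_apply, mul_one]
        have hne : (cell (sgn v)).Nonempty := ⟨v, hvcell⟩
        rw [show val (sgn v) = φ hne.some from dif_pos hne]
        exact hconst_cell _ _ hvcell _ hne.some_mem
      · intro σ _ hσ
        have hnm : v ∉ cell σ := fun hvc => hσ (funext fun j => (hvc.2 j).symm)
        rw [Set.indicator_of_notMem hnm, mul_zero]
      · intro h; exact absurd (Finset.mem_univ _) h
    · rw [hφB v hvB]
      symm
      apply Finset.sum_eq_zero
      intro σ _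
      rw [Set.indicator_of_notMem fun hvc => hvB hvc.1, mul_zero]
  have hmem : φ ∈ polyGens V := by
    have hfun : φ = ∑ σ : J → Fin 3, val σ • (cell σ).indicator (1 : V → ℤ) := by
      funext v
      rw [hsum v, Finset.sum_apply]
      exact Finset.sum_congr rfl fun σ _ => by
        rw [Pi.smul_apply, smul_eq_mul]
    rw [hfun]
    refine Submodule.sum_mem _ fun σ _ => Submodule.smul_mem _ _ ?_
    have hcelleq : cell σ = convexHull ℝ (S0 : Set V) ∩
        {v | ∀ j ∈ (Finset.univ : Finset J), v ∈ sideSet (F j) (Cc j) (σ j)} := by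
      show B ∩ {v | ∀ j, sgn v j = σ j} = _
      congr 1
      ext v
      simp only [Set.mem_setOf_eq, Finset.mem_univ, forall_true_left]
      exact forall_congr' fun j => hsgn_iff v j (σ j)
    rw [hcelleq]
    exact indicator_cell_mem Finset.univ F Cc σ S0
  rw [polyGens] at hmem
  obtain ⟨cf, hsupp_sub, hsum_eq⟩ := Submodule.mem_span_set.1 hmem
  have hgen : ∀ g : {x // x ∈ cf.support}, ∃ S : Finset V, S.Nonempty ∧
      (g : V → ℤ) = (convexHull ℝ (S : Set V)).indicator 1 :=
    fun g => hsupp_sub g.2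
  choose Sg hSg1 hSg2 using hgen
  set n := cf.support.card with hn
  set e : {x // x ∈ cf.support} ≃ Fin n := cf.support.equivFin with he
  refine ⟨n, fun a => cf (e.symm a), fun a => Sg (e.symm a), fun a => hSg1 _,
    fun a => Finsupp.mem_support_iff.1 (e.symm a).2, ?_⟩
  intro v
  have h1 : φ v = ∑ g ∈ cf.support, cf g * g v := by
    rw [← hsum_eq, Finsupp.sum, Finset.sum_apply]
    exact Finset.sum_congr rfl fun g _ => by rw [Pi.smul_apply, smul_eq_mul]
  rw [h1, ← Finset.sum_coe_sort cf.support (fun g => cf g * g v)]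
  rw [← Equiv.sum_comp e.symm (fun x : {x // x ∈ cf.support} => cf x * (x : V → ℤ) v)]
  refine Finset.sum_congr rfl fun a _ => ?_
  conv_rhs => rw [← hSg2 (e.symm a)]
end

section
/- Let V be a finite-dimensional real normed vector space, let A be a finite index set, let (X_α)_{α∈A} be compact convex polytopes in V (each the convex hull of a nonempty finite subset of V), and let C_α ∈ ℤ. Then the function φ = Σ_{α∈A} C_α·1_{X_α} is PL-constructible: there exists a finite family (P_b)_{b∈B} of locally closed convex sets, each a finite intersection of open or closed affine half-spaces, which covers V and is such that φ is constant on each P_b. -/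
namespace PLAux

/-- Fourier–Motzkin elimination core fact over ℝ. -/
lemma fm_exists_real {ι : Type*} [Fintype ι] (a β : ι → ℝ) :
    (∃ s : ℝ, ∀ i, a i + β i * s ≤ 0) ↔
      ((∀ i, β i = 0 → a i ≤ 0) ∧
        ∀ i j, 0 < β i → β j < 0 → a i / β i - a j / β j ≤ 0) := by
  classical
  constructor
  · rintro ⟨s, hs⟩
    refine ⟨fun i h0 => by have := hs i; rw [h0] at this; linarith, fun i j hi hj => ?_⟩
    have h1 : a i / β i ≤ -s := by
      rw [div_le_iff₀ hi]
      have := hs i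
      nlinarith
    have h2 : -s ≤ a j / β j := by
      rw [le_div_iff_of_neg hj]
      have := hs j
      nlinarith
    linarith
  · rintro ⟨h0, hp⟩
    have harith_pos : ∀ i s, 0 < β i → s ≤ -(a i) / β i → a i + β i * s ≤ 0 := by
      intro i s hb h
      have e : β i * (-(a i) / β i) = -(a i) := by
        rw [mul_comm, div_mul_cancel₀ _ (ne_of_gt hb)]
      have h2 : β i * s ≤ β i * (-(a i) / β i) := mul_le_mul_of_nonneg_left h hb.le
      linarith
    have harith_neg : ∀ i s, β i < 0 → -(a i) / β i ≤ s → a i + β i * s ≤ 0 := by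
      intro i s hb h
      have e : β i * (-(a i) / β i) = -(a i) := by
        rw [mul_comm, div_mul_cancel₀ _ (ne_of_lt hb)]
      have h2 : β i * s ≤ β i * (-(a i) / β i) := mul_le_mul_of_nonpos_left h hb.le
      linarith
    set U := Finset.univ.filter (fun i => 0 < β i) with hU
    set L := Finset.univ.filter (fun i => β i < 0) with hL
    by_cases hUne : U.Nonempty
    · refine ⟨U.inf' hUne (fun i => -(a i) / β i), fun i => ?_⟩
      rcases lt_trichotomy (β i) 0 with hneg | hzero | hpos
      · refine harith_neg i _ hneg ?_
        apply Finset.le_inf'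
        intro m hm
        have hmpos : 0 < β m := by
          have := Finset.mem_filter.mp hm
          exact this.2
        have := hp m i hmpos hneg
        rw [neg_div, neg_div]
        linarith
      · have := h0 i hzero; rw [hzero]; linarith
      · exact harith_pos i _ hpos
          (Finset.inf'_le _ (Finset.mem_filter.mpr ⟨Finset.mem_univ i, hpos⟩))
    · by_cases hLne : L.Nonempty
      · refine ⟨L.sup' hLne (fun i => -(a i) / β i), fun i => ?_⟩
        rcases lt_trichotomy (β i) 0 with hneg | hzero | hpos
        · exact harith_neg i _ hneg
            (Finset.le_sup' (fun i => -(a i) / β i)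
              (Finset.mem_filter.mpr ⟨Finset.mem_univ i, hneg⟩))
        · have := h0 i hzero; rw [hzero]; linarith
        · exact absurd ⟨i, Finset.mem_filter.mpr ⟨Finset.mem_univ i, hpos⟩⟩ hUne
      · refine ⟨0, fun i => ?_⟩
        rcases lt_trichotomy (β i) 0 with hneg | hzero | hpos
        · exact absurd ⟨i, Finset.mem_filter.mpr ⟨Finset.mem_univ i, hneg⟩⟩ hLne
        · have := h0 i hzero; rw [hzero]; linarith
        · exact absurd ⟨i, Finset.mem_filter.mpr ⟨Finset.mem_univ i, hpos⟩⟩ hUne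

/-- Fourier–Motzkin elimination: a set defined by a finite system of linear inequalities
with existentially quantified auxiliary real variables is a finite intersection of
closed half-spaces (with possibly zero functionals). -/
lemma fm_elim {V : Type*} [AddCommGroup V] [Module ℝ V] :
    ∀ (k : ℕ) (ι : Type) [Fintype ι] (g : ι → V →ₗ[ℝ] ℝ) (b : ι → Fin k → ℝ) (c : ι → ℝ),
    ∃ (m : ℕ) (g' : Fin m → V →ₗ[ℝ] ℝ) (c' : Fin m → ℝ),
      {v | ∃ t : Fin k → ℝ, ∀ i, g i v + ∑ j, b i j * t j ≤ c i} =
        ⋂ i', {v | g' i' v ≤ c' i'} := by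
  intro k
  induction k with
  | zero =>
    intro ι _ g b c
    refine ⟨Fintype.card ι, fun i' => g ((Fintype.equivFin ι).symm i'),
      fun i' => c ((Fintype.equivFin ι).symm i'), ?_⟩
    ext v
    simp only [Set.mem_setOf_eq, Set.mem_iInter]
    constructor
    · rintro ⟨t, ht⟩ i'
      have := ht ((Fintype.equivFin ι).symm i')
      simpa using this
    · intro h
      refine ⟨fun j => 0, fun i => ?_⟩
      have := h (Fintype.equivFin ι i)
      simp only [Equiv.symm_apply_apply] at this
      simpa using this
  | succ k IH =>
    intro ι _ g b c
    classical
    set g' : ι ⊕ ι × ι → V →ₗ[ℝ] ℝ := Sum.elim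
      (fun i => if b i 0 = 0 then g i else 0)
      (fun p => if 0 < b p.1 0 ∧ b p.2 0 < 0
        then (b p.1 0)⁻¹ • g p.1 - (b p.2 0)⁻¹ • g p.2 else 0) with hg'
    set b' : ι ⊕ ι × ι → Fin k → ℝ := Sum.elim
      (fun i => if b i 0 = 0 then (fun j => b i j.succ) else 0)
      (fun p => if 0 < b p.1 0 ∧ b p.2 0 < 0
        then (fun j => (b p.1 0)⁻¹ * b p.1 j.succ - (b p.2 0)⁻¹ * b p.2 j.succ) else 0) with hb'
    set c' : ι ⊕ ι × ι → ℝ := Sum.elim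
      (fun i => if b i 0 = 0 then c i else 0)
      (fun p => if 0 < b p.1 0 ∧ b p.2 0 < 0
        then c p.1 / b p.1 0 - c p.2 / b p.2 0 else 0) with hc'
    obtain ⟨m, G', C', hmain⟩ := IH (ι ⊕ ι × ι) g' b' c'
    refine ⟨m, G', C', ?_⟩
    rw [← hmain]
    ext v
    simp only [Set.mem_setOf_eq]
    constructor
    · rintro ⟨t, ht⟩
      refine ⟨fun j => t j.succ, ?_⟩
      have key : ∀ i, (g i v + ∑ j : Fin k, b i j.succ * t j.succ - c i) + (b i 0) * (t 0) ≤ 0 := by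
        intro i
        have := ht i
        rw [Fin.sum_univ_succ] at this
        linarith
      obtain ⟨H0, Hp⟩ := (fm_exists_real
        (fun i => g i v + ∑ j : Fin k, b i j.succ * t j.succ - c i)
        (fun i => b i 0)).mp ⟨t 0, key⟩
      rintro (i | ⟨i, j⟩)
      · by_cases hb0 : b i 0 = 0
        · simp only [hg', hb', hc', Sum.elim_inl, if_pos hb0]
          have := H0 i hb0
          linarith
        · simp [hg', hb', hc', if_neg hb0]
      · by_cases hc0 : 0 < b i 0 ∧ b j 0 < 0
        · have hpij := Hp i j hc0.1 hc0.2
          simp only [hg', hb', hc', Sum.elim_inr, if_pos hc0, LinearMap.sub_apply,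
            LinearMap.smul_apply, smul_eq_mul]
          have hsplit : ∑ j' : Fin k,
              ((b i 0)⁻¹ * b i j'.succ - (b j 0)⁻¹ * b j j'.succ) * t j'.succ
              = (b i 0)⁻¹ * (∑ j' : Fin k, b i j'.succ * t j'.succ)
                - (b j 0)⁻¹ * (∑ j' : Fin k, b j j'.succ * t j'.succ) := by
            rw [Finset.mul_sum, Finset.mul_sum, ← Finset.sum_sub_distrib]
            exact Finset.sum_congr rfl fun _ _ => by ring
          rw [hsplit]
          have key2 : ((b i 0)⁻¹ * g i v - (b j 0)⁻¹ * g j v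
                + ((b i 0)⁻¹ * (∑ j' : Fin k, b i j'.succ * t j'.succ)
                  - (b j 0)⁻¹ * (∑ j' : Fin k, b j j'.succ * t j'.succ)))
              - (c i / b i 0 - c j / b j 0)
              = (g i v + (∑ j' : Fin k, b i j'.succ * t j'.succ) - c i) / b i 0
                - (g j v + (∑ j' : Fin k, b j j'.succ * t j'.succ) - c j) / b j 0 := by
            ring
          linarith
        · simp [hg', hb', hc', if_neg hc0]
    · rintro ⟨t', hσ⟩
      have hcond := (fm_exists_real
        (fun i => g i v + ∑ j : Fin k, b i j.succ * t' j - c i)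
        (fun i => b i 0)).mpr ?_
      · obtain ⟨s, hs⟩ := hcond
        refine ⟨Fin.cons s t', fun i => ?_⟩
        rw [Fin.sum_univ_succ]
        simp only [Fin.cons_zero, Fin.cons_succ]
        have := hs i
        linarith
      · constructor
        · intro i hb0
          have := hσ (Sum.inl i)
          simp only [hg', hb', hc', Sum.elim_inl, if_pos hb0] at this
          linarith
        · intro i j hi hj
          have := hσ (Sum.inr (i, j))
          simp only [hg', hb', hc', Sum.elim_inr, if_pos (And.intro hi hj), LinearMap.sub_apply,
            LinearMap.smul_apply, smul_eq_mul] at this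
          have hsplit : ∑ j' : Fin k,
              ((b i 0)⁻¹ * b i j'.succ - (b j 0)⁻¹ * b j j'.succ) * t' j'
              = (b i 0)⁻¹ * (∑ j' : Fin k, b i j'.succ * t' j')
                - (b j 0)⁻¹ * (∑ j' : Fin k, b j j'.succ * t' j') := by
            rw [Finset.mul_sum, Finset.mul_sum, ← Finset.sum_sub_distrib]
            exact Finset.sum_congr rfl fun _ _ => by ring
          rw [hsplit] at this
          have key2 : ((b i 0)⁻¹ * g i v - (b j 0)⁻¹ * g j v
                + ((b i 0)⁻¹ * (∑ j' : Fin k, b i j'.succ * t' j')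
                  - (b j 0)⁻¹ * (∑ j' : Fin k, b j j'.succ * t' j')))
              - (c i / b i 0 - c j / b j 0)
              = (g i v + (∑ j' : Fin k, b i j'.succ * t' j') - c i) / b i 0
                - (g j v + (∑ j' : Fin k, b j j'.succ * t' j') - c j) / b j 0 := by
            ring
          linarith

end PLAux

namespace PLAux

/-- The convex hull of a finite set, parametrized by `Fin s.card`. -/
lemma convexHull_finset_eq_fin {V : Type*} [AddCommGroup V] [Module ℝ V] (s : Finset V) :
    convexHull ℝ (s : Set V) =
      {x | ∃ t : Fin s.card → ℝ, (∀ i, 0 ≤ t i) ∧ ∑ i, t i = 1 ∧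
        ∑ i, t i • ((s.equivFin.symm i : V)) = x} := by
  classical
  set e := s.equivFin with he
  set w : Fin s.card → V := fun i => ↑(e.symm i) with hw
  ext x
  simp only [Set.mem_setOf_eq]
  constructor
  · intro hx
    rw [Finset.convexHull_eq] at hx
    obtain ⟨wt, hw0, hw1, hcm⟩ := hx
    refine ⟨fun i => wt (w i), fun i => hw0 _ (e.symm i).2, ?_, ?_⟩
    · have hsum1 : ∑ i : Fin s.card, wt (w i) = ∑ y ∈ s, wt y :=
        (Equiv.sum_comp e.symm (fun y : {x // x ∈ s} => wt ↑y)).trans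
          (Finset.sum_coe_sort s wt)
      rw [hsum1, hw1]
    · have hsum2 : ∑ i : Fin s.card, wt (w i) • w i = ∑ y ∈ s, wt y • y :=
        (Equiv.sum_comp e.symm (fun y : {x // x ∈ s} => wt ↑y • (y : V))).trans
          (Finset.sum_coe_sort s (fun y => wt y • y))
      rw [hsum2]
      rw [Finset.centerMass_eq_of_sum_1 _ id hw1] at hcm
      simpa using hcm
  · rintro ⟨t, h0, h1, hx⟩
    exact mem_convexHull_of_exists_fintype t w h0 h1 (fun i => (e.symm i).2) hx

/-- Finite half-space representation of the convex hull of a finite set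
(functionals may be zero). -/
lemma polytope_hrep {V : Type*} [AddCommGroup V] [Module ℝ V] [FiniteDimensional ℝ V]
    (s : Finset V) :
    ∃ (m : ℕ) (g : Fin m → V →ₗ[ℝ] ℝ) (c : Fin m → ℝ),
      convexHull ℝ (s : Set V) = ⋂ i, {v | g i v ≤ c i} := by
  classical
  set n := s.card with hn
  set e := s.equivFin with he
  set w : Fin n → V := fun i => ↑(e.symm i) with hw
  set d := Module.finrank ℝ V with hd
  set B := Module.finBasis ℝ V with hB
  set ι₀ := (Fin n ⊕ (Bool ⊕ Fin d × Bool)) with hι₀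
  set G : ι₀ → V →ₗ[ℝ] ℝ := Sum.elim (fun _ => 0)
      (Sum.elim (fun _ => 0)
        (fun p => if p.2 then B.coord p.1 else -B.coord p.1)) with hG
  set bb : ι₀ → Fin n → ℝ := Sum.elim
      (fun i => fun j => if j = i then -1 else 0)
      (Sum.elim (fun q => fun _ => if q then 1 else -1)
        (fun p => fun i => if p.2 then -(B.coord p.1 (w i)) else B.coord p.1 (w i))) with hbb
  set cc : ι₀ → ℝ := Sum.elim (fun _ => 0)
      (Sum.elim (fun q => if q then 1 else -1) (fun _ => 0)) with hcc
  have hset : convexHull ℝ (s : Set V) =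
      {v | ∃ t : Fin n → ℝ, ∀ σ, G σ v + ∑ j, bb σ j * t j ≤ cc σ} := by
    rw [convexHull_finset_eq_fin]
    ext x
    simp only [Set.mem_setOf_eq]
    have hdsum : ∀ (t : Fin n → ℝ) (i : Fin n),
        ∑ j, (if j = i then (-1 : ℝ) else 0) * t j = -(t i) := by
      intro t i
      rw [Finset.sum_eq_single i]
      · simp
      · intro j _ hj; simp [hj]
      · intro h; exact absurd (Finset.mem_univ i) h
    have hcoordsum : ∀ (t : Fin n → ℝ) (j : Fin d),
        B.coord j (∑ i, t i • w i) = ∑ i, B.coord j (w i) * t i := by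
      intro t j
      rw [map_sum]
      exact Finset.sum_congr rfl fun i _ => by rw [map_smul, smul_eq_mul, mul_comm]
    constructor
    · rintro ⟨t, h0, h1, hx⟩
      refine ⟨t, ?_⟩
      rintro (i | q | ⟨j, pos⟩)
      · simp only [hG, hbb, hcc, Sum.elim_inl, LinearMap.zero_apply, hdsum t i]
        have := h0 i
        linarith
      · have hs1 : (∑ j, (1:ℝ) * t j) = 1 := by
          rw [show (∑ j, (1:ℝ) * t j) = ∑ j, t j from
            Finset.sum_congr rfl fun _ _ => one_mul _, h1]
        have hs2 : (∑ j, (-1:ℝ) * t j) = -1 := by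
          rw [show (∑ j, (-1:ℝ) * t j) = -∑ j, t j from by
            rw [← Finset.sum_neg_distrib]; exact Finset.sum_congr rfl fun _ _ => by ring, h1]
        cases q <;>
          simp only [hG, hbb, hcc, Sum.elim_inr, Sum.elim_inl, LinearMap.zero_apply,
            Bool.false_eq_true, if_false, if_true, hs1, hs2] <;> linarith
      · have hcx : B.coord j x = ∑ i, B.coord j (w i) * t i := by
          rw [← hx, hcoordsum]
        cases pos <;>
          simp only [hG, hbb, hcc, Sum.elim_inr, Bool.false_eq_true, if_false, if_true,
            LinearMap.neg_apply]
        · -- pos = false : -coord x + ∑ coord (w i) * t i ≤ 0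
          have : ∑ i, B.coord j (w i) * t i = B.coord j x := hcx.symm
          linarith
        · -- pos = true : coord x + ∑ (-(coord (w i))) * t i ≤ 0
          have hneg : ∑ i, -(B.coord j (w i)) * t i = -(∑ i, B.coord j (w i) * t i) := by
            rw [← Finset.sum_neg_distrib]
            exact Finset.sum_congr rfl fun _ _ => by ring
          rw [hneg]
          linarith
    · rintro ⟨t, hσ⟩
      have h0 : ∀ i, 0 ≤ t i := by
        intro i
        have := hσ (Sum.inl i)
        simp only [hG, hbb, hcc, Sum.elim_inl, LinearMap.zero_apply, hdsum t i] at this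
        linarith
      have h1 : ∑ i, t i = 1 := by
        have ht := hσ (Sum.inr (Sum.inl true))
        have hf := hσ (Sum.inr (Sum.inl false))
        simp only [hG, hbb, hcc, Sum.elim_inr, Sum.elim_inl, LinearMap.zero_apply,
          Bool.false_eq_true, if_false, if_true] at ht hf
        rw [show (∑ j, (1:ℝ) * t j) = ∑ j, t j from Finset.sum_congr rfl fun _ _ => one_mul _]
          at ht
        rw [show (∑ j, (-1:ℝ) * t j) = -∑ j, t j from by
          rw [← Finset.sum_neg_distrib]; exact Finset.sum_congr rfl fun _ _ => by ring] at hf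
        linarith
      refine ⟨t, h0, h1, ?_⟩
      apply (B.ext_elem_iff).mpr
      intro j
      have ht := hσ (Sum.inr (Sum.inr (j, true)))
      have hf := hσ (Sum.inr (Sum.inr (j, false)))
      simp only [hG, hbb, hcc, Sum.elim_inr, Bool.false_eq_true, if_false, if_true,
        LinearMap.neg_apply] at ht hf
      have hneg : ∑ i, -(B.coord j (w i)) * t i = -(∑ i, B.coord j (w i) * t i) := by
        rw [← Finset.sum_neg_distrib]
        exact Finset.sum_congr rfl fun _ _ => by ring
      rw [hneg] at ht
      have heq : B.coord j x = ∑ i, B.coord j (w i) * t i := by linarith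
      have := hcoordsum t j
      rw [← Module.Basis.coord_apply, ← Module.Basis.coord_apply]
      rw [this, ← heq]
  obtain ⟨m, g, c, h⟩ := fm_elim n ι₀ G bb cc
  exact ⟨m, g, c, by rw [hset, h]⟩

end PLAux

namespace PLAux

/-- Half-space representation with all functionals nonzero (for nonempty finite sets). -/
lemma polytope_hrep_nonzero {V : Type*} [AddCommGroup V] [Module ℝ V] [FiniteDimensional ℝ V]
    (s : Finset V) (hs : s.Nonempty) :
    ∃ (m : ℕ) (g : Fin m → V →ₗ[ℝ] ℝ) (c : Fin m → ℝ), (∀ i, g i ≠ 0) ∧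
      convexHull ℝ (s : Set V) = ⋂ i, {v | g i v ≤ c i} := by
  classical
  obtain ⟨m, g, c, h⟩ := polytope_hrep s
  set J := {i : Fin m // g i ≠ 0} with hJ
  set eJ : Fin (Fintype.card J) ≃ J := (Fintype.equivFin J).symm with heJ
  refine ⟨Fintype.card J, fun i' => g ↑(eJ i'), fun i' => c ↑(eJ i'),
    fun i' => (eJ i').2, ?_⟩
  obtain ⟨y, hy⟩ := hs
  have hyX : y ∈ convexHull ℝ (s : Set V) := subset_convexHull ℝ _ (Finset.mem_coe.mpr hy)
  apply Set.Subset.antisymm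
  · rw [h]
    intro x hx
    rw [Set.mem_iInter]
    intro i'
    exact (Set.mem_iInter.mp hx) _
  · intro x hx
    rw [h, Set.mem_iInter]
    intro i
    by_cases hgi : g i = 0
    · have h0c : (0 : ℝ) ≤ c i := by
        have := Set.mem_iInter.mp (h ▸ hyX) i
        simpa [hgi] using this
      simp only [Set.mem_setOf_eq, hgi, LinearMap.zero_apply]
      exact h0c
    · have := Set.mem_iInter.mp hx (eJ.symm ⟨i, hgi⟩)
      simpa using this

/-- The triple (functional, constant, strictness) defining one of the two half-spaces
cutting out the cell with sign `o` relative to the hyperplane `{Gj = Dj}`. -/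
def trip {V : Type*} [AddCommGroup V] [Module ℝ V] (Gj : V →ₗ[ℝ] ℝ) (Dj : ℝ) :
    Ordering → Bool → (V →ₗ[ℝ] ℝ) × ℝ × Bool
  | .lt, _ => (Gj, Dj, true)
  | .eq, true => (Gj, Dj, false)
  | .eq, false => (-Gj, -Dj, false)
  | .gt, _ => (-Gj, -Dj, true)

/-- The half-space described by a triple. -/
def half {V : Type*} [AddCommGroup V] [Module ℝ V] (q : (V →ₗ[ℝ] ℝ) × ℝ × Bool) : Set V :=
  if q.2.2 then {v | q.1 v < q.2.1} else {v | q.1 v ≤ q.2.1}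

/-- The relation on `ℝ` corresponding to an `Ordering`. -/
def Rel : Ordering → ℝ → ℝ → Prop
  | .lt, a, b => a < b
  | .eq, a, b => a = b
  | .gt, a, b => b < a

/-- The sign of the comparison of two reals. -/
noncomputable def sign (a b : ℝ) : Ordering := if a < b then .lt else if a = b then .eq else .gt

lemma rel_sign (a b : ℝ) : Rel (sign a b) a b := by
  unfold sign
  split_ifs with h1 h2
  · exact h1
  · exact h2
  · exact lt_of_le_of_ne (not_lt.mp h1) (fun hba => h2 hba.symm)

lemma rel_le_iff {o : Ordering} {a b : ℝ} (h : Rel o a b) : a ≤ b ↔ o ≠ .gt := by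
  cases o
  · exact iff_of_true (le_of_lt h) (by simp)
  · exact iff_of_true (le_of_eq h) (by simp)
  · exact iff_of_false (not_le.mpr h) (by simp)

lemma trip_fst_ne {V : Type*} [AddCommGroup V] [Module ℝ V] {Gj : V →ₗ[ℝ] ℝ} {Dj : ℝ}
    (h : Gj ≠ 0) (o : Ordering) (b : Bool) : (trip Gj Dj o b).1 ≠ 0 := by
  cases o <;> cases b <;> simp [trip, h, neg_eq_zero]

lemma mem_half_trip {V : Type*} [AddCommGroup V] [Module ℝ V] (Gj : V →ₗ[ℝ] ℝ) (Dj : ℝ)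
    (o : Ordering) (x : V) :
    (x ∈ half (trip Gj Dj o true) ∧ x ∈ half (trip Gj Dj o false)) ↔ Rel o (Gj x) Dj := by
  cases o <;>
    simp only [trip, half, if_true, if_false, Set.mem_setOf_eq, LinearMap.neg_apply,
      Bool.false_eq_true, and_self, Rel]
  · constructor
    · rintro ⟨h1, h2⟩
      exact le_antisymm h1 (by linarith)
    · intro h; exact ⟨le_of_eq h, by linarith [le_of_eq h.symm]⟩
  · constructor
    · intro h; linarith
    · intro h; linarith

/-- Cell decomposition associated with a finite family of nonzero affine functionals. -/
lemma cells_assembly {V : Type*} [AddCommGroup V] [Module ℝ V] {J : Type*} [Fintype J]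
    (G : J → V →ₗ[ℝ] ℝ) (D : J → ℝ) (hG : ∀ j, G j ≠ 0) :
    ∃ (M : ℕ) (P : Fin M → Set V),
      (∀ b, ∃ (k : ℕ) (f : Fin k → (V →ₗ[ℝ] ℝ)) (c : Fin k → ℝ) (strict : Fin k → Bool),
        (∀ j, f j ≠ 0) ∧
        P b = ⋂ j, (if strict j then {v : V | f j v < c j} else {v : V | f j v ≤ c j})) ∧
      (⋃ b, P b) = Set.univ ∧
      (∀ b x y, x ∈ P b → y ∈ P b → ∀ j, (G j x ≤ D j ↔ G j y ≤ D j)) := by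
  classical
  set kc := Fintype.card (J × Bool) with hkc
  set eP : Fin kc ≃ J × Bool := (Fintype.equivFin (J × Bool)).symm with heP
  set M := Fintype.card (J → Ordering) with hM
  set E : Fin M ≃ (J → Ordering) := (Fintype.equivFin (J → Ordering)).symm with hE
  set Cell : (J → Ordering) → Set V := fun σ =>
    ⋂ i : Fin kc, half (trip (G (eP i).1) (D (eP i).1) (σ (eP i).1) (eP i).2) with hCelldef
  have hCell : ∀ (σ : J → Ordering) (x : V),
      x ∈ Cell σ ↔ ∀ j : J, Rel (σ j) (G j x) (D j) := by
    intro σ x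
    have h1 : x ∈ Cell σ ↔
        ∀ p : J × Bool, x ∈ half (trip (G p.1) (D p.1) (σ p.1) p.2) := by
      rw [hCelldef]
      simp only [Set.mem_iInter]
      constructor
      · intro h p
        have := h (eP.symm p)
        rwa [Equiv.apply_symm_apply] at this
      · intro h i
        exact h _
    rw [h1]
    constructor
    · intro h j
      exact (mem_half_trip _ _ _ _).mp ⟨h (j, true), h (j, false)⟩
    · rintro h ⟨j, bb⟩
      have := (mem_half_trip (G j) (D j) (σ j) x).mpr (h j)
      cases bb
      · exact this.2
      · exact this.1
  refine ⟨M, fun b => Cell (E b), ?_, ?_, ?_⟩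
  · intro b
    refine ⟨kc,
      fun i => (trip (G (eP i).1) (D (eP i).1) (E b (eP i).1) (eP i).2).1,
      fun i => (trip (G (eP i).1) (D (eP i).1) (E b (eP i).1) (eP i).2).2.1,
      fun i => (trip (G (eP i).1) (D (eP i).1) (E b (eP i).1) (eP i).2).2.2,
      fun i => trip_fst_ne (hG _) _ _, ?_⟩
    rw [hCelldef]
    exact Set.iInter_congr fun i => rfl
  · apply Set.eq_univ_of_forall
    intro x
    refine Set.mem_iUnion.mpr ⟨E.symm (fun j => sign (G j x) (D j)), ?_⟩
    rw [hCell]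
    intro j
    rw [Equiv.apply_symm_apply]
    exact rel_sign _ _
  · intro b x y hx hy j
    have hx' := (hCell _ _).mp hx j
    have hy' := (hCell _ _).mp hy j
    rw [rel_le_iff hx', rel_le_iff hy']

end PLAux

/-- **Integer combinations of indicators of compact convex polytopes are
PL-constructible.** Given finitely many compact convex polytopes `X_α` (convex hulls of
nonempty finite sets) and integers `C_α`, the function `φ = Σ_α C_α · 1_{X_α}` is
PL-constructible: there is a finite covering of `V` by locally closed sets, each a
finite intersection of open or closed affine half-spaces (with nonzero linear
functionals), on each of which `φ` is constant. -/
theorem sum_indicator_polytopes_plConstructible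
    {V : Type*} [NormedAddCommGroup V] [NormedSpace ℝ V] [FiniteDimensional ℝ V]
    {A : Type*} [Fintype A] (C : A → ℤ) (S : A → Finset V) (hS : ∀ a, (S a).Nonempty) :
    ∃ (m : ℕ) (P : Fin m → Set V),
      (∀ b, ∃ (k : ℕ) (f : Fin k → (V →ₗ[ℝ] ℝ)) (c : Fin k → ℝ) (strict : Fin k → Bool),
        (∀ j, f j ≠ 0) ∧
        P b = ⋂ j, (if strict j then {v : V | f j v < c j} else {v : V | f j v ≤ c j})) ∧
      (⋃ b, P b) = Set.univ ∧
      ∀ b, ∀ x ∈ P b, ∀ y ∈ P b,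
        ∑ a, C a * (convexHull ℝ ((S a : Set V))).indicator 1 x =
        ∑ a, C a * (convexHull ℝ ((S a : Set V))).indicator 1 y := by
  classical
  choose m g c hne hX using fun a => PLAux.polytope_hrep_nonzero (S a) (hS a)
  obtain ⟨M, P, h1, h2, h3⟩ := PLAux.cells_assembly
    (J := (a : A) × Fin (m a)) (fun j => g j.1 j.2) (fun j => c j.1 j.2)
    (fun j => hne j.1 j.2)
  refine ⟨M, P, h1, h2, ?_⟩
  intro b x hx y hy
  have hmem : ∀ a, (x ∈ convexHull ℝ ((S a : Set V)) ↔ y ∈ convexHull ℝ ((S a : Set V))) := by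
    intro a
    rw [hX a]
    simp only [Set.mem_iInter, Set.mem_setOf_eq]
    exact forall_congr' fun i => h3 b x y hx hy ⟨a, i⟩
  refine Finset.sum_congr rfl fun a _ => ?_
  congr 1
  simp only [Set.indicator_apply, Pi.one_apply]
  rw [if_congr (hmem a) rfl rfl]
end

section
/- Let V and W be finite-dimensional real normed vector spaces and let f : V → W be an affine map. Let A be a finite index set, C_α ∈ ℤ, and let (X_α)_{α∈A} be nonempty compact convex subsets of V such that Σ_{α∈A} C_α·1_{X_α}(v) = 0 for all v ∈ V. Then Σ_{α∈A} C_α·1_{f(X_α)}(w) = 0 for all w ∈ W. Consequently, for φ in the subgroup of functions V → ℤ generated by indicators of nonempty compact convex sets, the pushforward f_*φ, defined from any decomposition φ = Σ_α C_α·1_{X_α} by f_*φ = Σ_α C_α·1_{f(X_α)}, is independent of the chosen decomposition, and its Euler integral satisfies ∫ f_*φ = ∫ φ. -/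
/-- The subgroup of `V → ℤ` generated by indicator functions of nonempty compact
convex subsets of `V`. -/
def cfGroup (V : Type*) [NormedAddCommGroup V] [NormedSpace ℝ V] : AddSubgroup (V → ℤ) :=
  AddSubgroup.closure
    {g : V → ℤ | ∃ X : Set V, X.Nonempty ∧ IsCompact X ∧ Convex ℝ X ∧ g = X.indicator 1}

open Finset
open scoped Classical

/-- 1-D Groemer: a vanishing integer combination of indicators of compact convex
subsets of `ℝ` has vanishing total coefficient over the nonempty sets. -/
lemma groemer_real {A : Type*} [Fintype A] (C : A → ℤ) (K : A → Set ℝ)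
    (hcpt : ∀ a, IsCompact (K a)) (hcvx : ∀ a, Convex ℝ (K a))
    (hrel : ∀ t : ℝ, ∑ a, C a * (K a).indicator 1 t = 0) :
    ∑ a ∈ Finset.univ.filter (fun a => (K a).Nonempty), C a = 0 := by
  classical
  set N := Finset.univ.filter (fun a => (K a).Nonempty) with hN
  set m : A → ℝ := fun a => sInf (K a) with hm
  set M : A → ℝ := fun a => sSup (K a) with hM
  have hIcc : ∀ a, (K a).Nonempty → K a = Set.Icc (m a) (M a) := by
    intro a ha
    apply Set.Subset.antisymm
    · intro x hx
      exact ⟨csInf_le (hcpt a).bddBelow hx, le_csSup (hcpt a).bddAbove hx⟩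
    · exact (hcvx a).ordConnected.out ((hcpt a).sInf_mem ha) ((hcpt a).sSup_mem ha)
  have hmM : ∀ a, (K a).Nonempty → m a ≤ M a := by
    intro a ha
    exact csInf_le_csSup ha (hcpt a).bddBelow (hcpt a).bddAbove
  have key : ∀ t : ℝ, ∑ a ∈ N.filter (fun a => M a = t), C a = 0 := by
    intro t
    set E : Finset ℝ := N.image m ∪ N.image M with hE
    obtain ⟨s, hts, hs⟩ : ∃ s, t < s ∧ ∀ e ∈ E, e ≤ t ∨ s < e := by
      by_cases h : (E.filter (fun e => t < e)).Nonempty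
      · set e0 := (E.filter (fun e => t < e)).min' h with he0
        have he0t : t < e0 := (Finset.mem_filter.mp ((E.filter (fun e => t < e)).min'_mem h)).2
        refine ⟨(t + e0) / 2, by linarith, ?_⟩
        intro e he
        by_cases het : t < e
        · right
          have : e0 ≤ e := Finset.min'_le _ e (Finset.mem_filter.mpr ⟨he, het⟩)
          linarith
        · exact Or.inl (le_of_not_gt het)
      · refine ⟨t + 1, by linarith, ?_⟩
        intro e he
        by_cases het : t < e
        · exact absurd ⟨e, Finset.mem_filter.mpr ⟨he, het⟩⟩ h
        · exact Or.inl (le_of_not_gt het)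
    have hterm : ∀ a, C a * (K a).indicator 1 t - C a * (K a).indicator 1 s
        = if a ∈ N.filter (fun a => M a = t) then C a else 0 := by
      intro a
      by_cases hne : (K a).Nonempty
      · have hmE : m a ≤ t ∨ s < m a :=
          hs (m a) (Finset.mem_union_left _ (Finset.mem_image_of_mem m
            (Finset.mem_filter.mpr ⟨Finset.mem_univ a, hne⟩)))
        have hME : M a ≤ t ∨ s < M a :=
          hs (M a) (Finset.mem_union_right _ (Finset.mem_image_of_mem M
            (Finset.mem_filter.mpr ⟨Finset.mem_univ a, hne⟩)))
        have hab := hmM a hne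
        have hmemN : a ∈ N := Finset.mem_filter.mpr ⟨Finset.mem_univ a, hne⟩
        have hQ : (m a ≤ s ∧ s ≤ M a) ↔ (m a ≤ t ∧ t < M a) := by
          constructor
          · rintro ⟨h1, h2⟩
            rcases hmE with h' | h'
            · exact ⟨h', lt_of_lt_of_le hts h2⟩
            · exact absurd h1 (not_le.mpr h')
          · rintro ⟨h1, h2⟩
            refine ⟨h1.trans hts.le, ?_⟩
            rcases hME with h' | h'
            · exact absurd h2 (not_lt.mpr h')
            · exact h'.le
        rw [hIcc a hne]
        simp only [Set.indicator_apply, Set.mem_Icc, Pi.one_apply, Finset.mem_filter,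
          hmemN, true_and, hQ]
        by_cases hR : M a = t
        · have h1 : m a ≤ t ∧ t ≤ M a := ⟨hab.trans hR.le, hR.ge⟩
          have h2 : ¬(m a ≤ t ∧ t < M a) := fun h => lt_irrefl t (hR ▸ h.2)
          rw [if_pos h1, if_neg h2, if_pos hR]; ring
        · by_cases hP : m a ≤ t ∧ t ≤ M a
          · have htM : t < M a := lt_of_le_of_ne hP.2 (fun h => hR h.symm)
            rw [if_pos hP, if_pos ⟨hP.1, htM⟩, if_neg hR]; ring
          · have hP' : ¬(m a ≤ t ∧ t < M a) := fun h => hP ⟨h.1, h.2.le⟩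
            rw [if_neg hP, if_neg hP', if_neg hR]; ring
      · rw [Set.not_nonempty_iff_eq_empty] at hne
        have hnm : a ∉ N.filter (fun a => M a = t) := by
          intro hmem
          have := (Finset.mem_filter.mp (Finset.mem_filter.mp hmem).1).2
          rw [hne] at this
          exact Set.not_nonempty_empty this
        simp [hne, hnm]
    have hsum : ∑ a, (C a * (K a).indicator 1 t - C a * (K a).indicator 1 s) = 0 := by
      rw [Finset.sum_sub_distrib, hrel t, hrel s]; ring
    calc ∑ a ∈ N.filter (fun a => M a = t), C a
        = ∑ a, if a ∈ N.filter (fun a => M a = t) then C a else 0 := by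
          rw [Finset.sum_ite_mem, Finset.univ_inter]
      _ = ∑ a, (C a * (K a).indicator 1 t - C a * (K a).indicator 1 s) := by
          exact Finset.sum_congr rfl fun a _ => (hterm a).symm
      _ = 0 := hsum
  have hmaps : ∀ a ∈ N, M a ∈ N.image M := fun a ha => Finset.mem_image_of_mem M ha
  calc ∑ a ∈ N, C a
      = ∑ t ∈ N.image M, ∑ a ∈ N.filter (fun a => M a = t), C a :=
        (Finset.sum_fiberwise_of_maps_to hmaps C).symm
    _ = 0 := Finset.sum_eq_zero fun t _ => key t

/-- The linear map appending a zero last coordinate. -/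
noncomputable def snocL (n : ℕ) : (Fin n → ℝ) →ₗ[ℝ] (Fin (n + 1) → ℝ) where
  toFun x := Fin.snoc x 0
  map_add' x y := by
    funext i
    refine Fin.lastCases ?_ ?_ i <;> simp
  map_smul' c x := by
    funext i
    refine Fin.lastCases ?_ ?_ i <;> simp

/-- The affine map `x ↦ snoc x t` filling in the last coordinate with `t`. -/
noncomputable def snocA (n : ℕ) (t : ℝ) : (Fin n → ℝ) →ᵃ[ℝ] (Fin (n + 1) → ℝ) :=
  AffineMap.mk' (fun x => Fin.snoc x t) (snocL n) 0 (by
    intro p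
    funext i
    refine Fin.lastCases ?_ ?_ i <;> simp [snocL])

lemma snocA_apply (n : ℕ) (t : ℝ) (x : Fin n → ℝ) : snocA n t x = Fin.snoc x t := rfl

/-- Groemer's theorem for `ℝⁿ`. -/
lemma groemer_pi {A : Type*} [Fintype A] (C : A → ℤ) :
    ∀ (n : ℕ) (K : A → Set (Fin n → ℝ)),
    (∀ a, IsCompact (K a)) → (∀ a, Convex ℝ (K a)) →
    (∀ x, ∑ a, C a * (K a).indicator 1 x = 0) →
    ∑ a ∈ Finset.univ.filter (fun a => (K a).Nonempty), C a = 0 := by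
  intro n
  induction n with
  | zero =>
    intro K hcpt hcvx hrel
    have x0 : Fin 0 → ℝ := fun i => i.elim0
    calc ∑ a ∈ Finset.univ.filter (fun a => (K a).Nonempty), C a
        = ∑ a, C a * (K a).indicator 1 x0 := by
          rw [Finset.sum_filter]
          refine Finset.sum_congr rfl fun a _ => ?_
          by_cases hne : (K a).Nonempty
          · obtain ⟨y, hy⟩ := hne
            have hyx : y = x0 := funext fun i => i.elim0
            rw [if_pos ⟨y, hy⟩, Set.indicator_of_mem (hyx ▸ hy) 1, Pi.one_apply, mul_one]
          · rw [Set.not_nonempty_iff_eq_empty] at hne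
            simp [hne, Set.not_nonempty_empty]
      _ = 0 := hrel x0
  | succ n ih =>
    intro K hcpt hcvx hrel
    set I : A → Set ℝ := fun a => (fun y : Fin (n + 1) → ℝ => y (Fin.last n)) '' K a with hI
    have hIcpt : ∀ a, IsCompact (I a) := fun a => (hcpt a).image (continuous_apply _)
    have hIcvx : ∀ a, Convex ℝ (I a) := fun a =>
      (hcvx a).linear_image (LinearMap.proj (Fin.last n))
    have hIne : ∀ a, (I a).Nonempty ↔ (K a).Nonempty := fun a => Set.image_nonempty
    have hrel1 : ∀ t : ℝ, ∑ a, C a * (I a).indicator 1 t = 0 := by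
      intro t
      set Z : A → Set (Fin n → ℝ) := fun a => (snocA n t) ⁻¹' K a with hZ
      have hZcvx : ∀ a, Convex ℝ (Z a) := fun a => (hcvx a).affine_preimage (snocA n t)
      have hZmem : ∀ a (x : Fin n → ℝ), x ∈ Z a ↔ Fin.snoc x t ∈ K a := fun a x => Iff.rfl
      have hZcpt : ∀ a, IsCompact (Z a) := by
        intro a
        by_cases hne : (K a).Nonempty
        · obtain ⟨R, hR⟩ := ((hcpt a).isBounded).exists_norm_le
          have hR0 : 0 ≤ R := le_trans (norm_nonneg _) (hR _ hne.choose_spec)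
          refine Metric.isCompact_of_isClosed_isBounded
            ((hcpt a).isClosed.preimage (snocA n t).continuous_of_finiteDimensional) ?_
          rw [isBounded_iff_forall_norm_le]
          refine ⟨R, fun x hx => ?_⟩
          rw [pi_norm_le_iff_of_nonneg hR0]
          intro i
          calc ‖x i‖ = ‖(Fin.snoc x t : Fin (n+1) → ℝ) i.castSucc‖ := by rw [Fin.snoc_castSucc]
            _ ≤ ‖(Fin.snoc x t : Fin (n+1) → ℝ)‖ := norm_le_pi_norm _ _
            _ ≤ R := hR _ ((hZmem a x).mp hx)
        · rw [Set.not_nonempty_iff_eq_empty] at hne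
          simp only [hZ, hne, Set.preimage_empty]
          exact isCompact_empty
      have hZrel : ∀ x, ∑ a, C a * (Z a).indicator 1 x = 0 := by
        intro x
        calc ∑ a, C a * (Z a).indicator 1 x
            = ∑ a, C a * (K a).indicator 1 (Fin.snoc x t) := by
              exact Finset.sum_congr rfl fun a _ => by congr 1
          _ = 0 := hrel _
      have hZI : ∀ a, (Z a).Nonempty ↔ t ∈ I a := by
        intro a
        constructor
        · rintro ⟨x, hx⟩
          exact ⟨Fin.snoc x t, hx, Fin.snoc_last _ _⟩
        · rintro ⟨y, hy, hyt⟩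
          refine ⟨Fin.init y, ?_⟩
          show Fin.snoc (Fin.init y) t ∈ K a
          rw [← hyt, Fin.snoc_init_self]
          exact hy
      calc ∑ a, C a * (I a).indicator 1 t
          = ∑ a ∈ Finset.univ.filter (fun a => (Z a).Nonempty), C a := by
            rw [Finset.sum_filter]
            refine Finset.sum_congr rfl fun a _ => ?_
            by_cases h : t ∈ I a
            · rw [Set.indicator_of_mem h, Pi.one_apply, mul_one, if_pos ((hZI a).mpr h)]
            · rw [Set.indicator_of_notMem h, mul_zero,
                if_neg (fun hh => h ((hZI a).mp hh))]
        _ = 0 := ih Z hZcpt hZcvx hZrel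
    calc ∑ a ∈ Finset.univ.filter (fun a => (K a).Nonempty), C a
        = ∑ a ∈ Finset.univ.filter (fun a => (I a).Nonempty), C a :=
          Finset.sum_congr (Finset.filter_congr fun a _ => by rw [hIne a]) fun a _ => rfl
      _ = 0 := groemer_real C I hIcpt hIcvx hrel1

/-- Groemer's theorem for a general finite-dimensional real normed space. -/
lemma groemer {V : Type*} [NormedAddCommGroup V] [NormedSpace ℝ V] [FiniteDimensional ℝ V]
    {A : Type*} [Fintype A] (C : A → ℤ) (K : A → Set V)
    (hcpt : ∀ a, IsCompact (K a)) (hcvx : ∀ a, Convex ℝ (K a))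
    (hrel : ∀ v : V, ∑ a, C a * (K a).indicator 1 v = 0) :
    ∑ a ∈ Finset.univ.filter (fun a => (K a).Nonempty), C a = 0 := by
  classical
  set n := Module.finrank ℝ V with hn
  let e : V ≃L[ℝ] (Fin n → ℝ) := (Module.finBasis ℝ V).equivFun.toContinuousLinearEquiv
  set K' : A → Set (Fin n → ℝ) := fun a => e '' K a with hK'
  have hcpt' : ∀ a, IsCompact (K' a) := fun a => (hcpt a).image e.continuous
  have hcvx' : ∀ a, Convex ℝ (K' a) := fun a =>
    (hcvx a).linear_image (e : V →ₗ[ℝ] (Fin n → ℝ))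
  have hmem : ∀ a (x : Fin n → ℝ), x ∈ K' a ↔ e.symm x ∈ K a := by
    intro a x
    constructor
    · rintro ⟨v, hv, rfl⟩
      simpa using hv
    · intro h
      exact ⟨e.symm x, h, by simp⟩
  have hrel' : ∀ x, ∑ a, C a * (K' a).indicator 1 x = 0 := by
    intro x
    calc ∑ a, C a * (K' a).indicator 1 x
        = ∑ a, C a * (K a).indicator 1 (e.symm x) := by
          refine Finset.sum_congr rfl fun a _ => ?_
          congr 1
          by_cases h : e.symm x ∈ K a
          · rw [Set.indicator_of_mem ((hmem a x).mpr h), Set.indicator_of_mem h]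
            rfl
          · rw [Set.indicator_of_notMem (fun hh => h ((hmem a x).mp hh)),
              Set.indicator_of_notMem h]
      _ = 0 := hrel _
  have h0 := groemer_pi C n K' hcpt' hcvx' hrel'
  rw [← h0]
  refine Finset.sum_congr (Finset.filter_congr fun a _ => ?_) fun a _ => rfl
  exact ⟨fun h => h.image e, fun h => by
    obtain ⟨x, hx⟩ := h
    exact ⟨e.symm x, (hmem a x).mp hx⟩⟩

/-- Pushing forward a vanishing combination along an affine map keeps it vanishing. -/
lemma push_zero {V W : Type*} [NormedAddCommGroup V] [NormedSpace ℝ V] [FiniteDimensional ℝ V]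
    [NormedAddCommGroup W] [NormedSpace ℝ W] [FiniteDimensional ℝ W]
    (f : V →ᵃ[ℝ] W) {A : Type*} [Fintype A] (C : A → ℤ) (X : A → Set V)
    (hXcpt : ∀ a, IsCompact (X a)) (hXcvx : ∀ a, Convex ℝ (X a))
    (hrel : ∀ v : V, ∑ a, C a * (X a).indicator 1 v = 0) :
    ∀ w : W, ∑ a, C a * (f '' X a).indicator 1 w = 0 := by
  classical
  intro w
  set Y : A → Set V := fun a => X a ∩ f ⁻¹' {w} with hY
  have hYcpt : ∀ a, IsCompact (Y a) := fun a =>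
    (hXcpt a).inter_right (isClosed_singleton.preimage f.continuous_of_finiteDimensional)
  have hYcvx : ∀ a, Convex ℝ (Y a) := fun a =>
    (hXcvx a).inter ((convex_singleton w).affine_preimage f)
  have hYrel : ∀ v : V, ∑ a, C a * (Y a).indicator 1 v = 0 := by
    intro v
    by_cases hv : f v = w
    · calc ∑ a, C a * (Y a).indicator 1 v = ∑ a, C a * (X a).indicator 1 v := by
            refine Finset.sum_congr rfl fun a _ => ?_
            congr 1
            by_cases h : v ∈ X a
            · rw [Set.indicator_of_mem (show v ∈ Y a from ⟨h, by simp [hv]⟩),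
                Set.indicator_of_mem h]
            · rw [Set.indicator_of_notMem (show v ∉ Y a from fun hh => h hh.1),
                Set.indicator_of_notMem h]
        _ = 0 := hrel v
    · refine Finset.sum_eq_zero fun a _ => ?_
      rw [Set.indicator_of_notMem (show v ∉ Y a from fun hh => hv hh.2), mul_zero]
  have h0 := groemer C Y hYcpt hYcvx hYrel
  calc ∑ a, C a * (f '' X a).indicator 1 w
      = ∑ a ∈ Finset.univ.filter (fun a => (Y a).Nonempty), C a := by
        rw [Finset.sum_filter]
        refine Finset.sum_congr rfl fun a _ => ?_
        by_cases h : w ∈ f '' X a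
        · obtain ⟨x, hx, hfx⟩ := h
          rw [Set.indicator_of_mem (show w ∈ f '' X a from ⟨x, hx, hfx⟩), Pi.one_apply, mul_one,
            if_pos (show (Y a).Nonempty from ⟨x, hx, by simp [hfx]⟩)]
        · rw [Set.indicator_of_notMem h, mul_zero]
          rw [if_neg]
          rintro ⟨x, hx1, hx2⟩
          exact h ⟨x, hx1, by simpa using hx2⟩
    _ = 0 := h0

lemma integral_eval {V : Type*} [NormedAddCommGroup V] [NormedSpace ℝ V]
    (IV : cfGroup V →+ ℤ)
    (hIV : ∀ (S : Set V), S.Nonempty → IsCompact S → Convex ℝ S →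
      ∀ hmem : (S.indicator 1 : V → ℤ) ∈ cfGroup V, IV ⟨S.indicator 1, hmem⟩ = 1)
    {A : Type*} [Fintype A] (C : A → ℤ) (X : A → Set V)
    (hne : ∀ a, (X a).Nonempty) (hcpt : ∀ a, IsCompact (X a)) (hcvx : ∀ a, Convex ℝ (X a))
    (hφ : (fun v : V => ∑ a, C a * (X a).indicator 1 v) ∈ cfGroup V) :
    IV ⟨fun v => ∑ a, C a * (X a).indicator 1 v, hφ⟩ = ∑ a, C a := by
  have hmem : ∀ a, ((X a).indicator 1 : V → ℤ) ∈ cfGroup V := fun a =>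
    AddSubgroup.subset_closure ⟨X a, hne a, hcpt a, hcvx a, rfl⟩
  have hdecomp : (⟨fun v => ∑ a, C a * (X a).indicator 1 v, hφ⟩ : cfGroup V)
      = ∑ a, C a • (⟨(X a).indicator 1, hmem a⟩ : cfGroup V) := by
    apply Subtype.ext
    simp only [AddSubmonoidClass.coe_finset_sum, AddSubgroupClass.coe_zsmul]
    funext v
    simp [Finset.sum_apply, Pi.smul_apply, smul_eq_mul]
  rw [hdecomp, map_sum]
  refine Finset.sum_congr rfl fun a _ => ?_
  rw [map_zsmul, hIV (X a) (hne a) (hcpt a) (hcvx a) (hmem a), smul_eq_mul, mul_one]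

/-- **Pushforward of constructible functions along affine maps.**
If `Σ_α C_α · 1_{X_α} = 0` pointwise for nonempty compact convex sets `X_α ⊆ V` and an
affine map `f : V → W`, then `Σ_α C_α · 1_{f(X_α)} = 0` pointwise. Consequently the
pushforward `f_*φ` is independent of the chosen decomposition of `φ`, and every Euler
integral (group homomorphism sending indicators of nonempty compact convex sets to `1`)
satisfies `∫ f_*φ = ∫ φ`. -/
theorem pushforward_constructible_well_defined
    {V W : Type*} [NormedAddCommGroup V] [NormedSpace ℝ V] [FiniteDimensional ℝ V]
    [NormedAddCommGroup W] [NormedSpace ℝ W] [FiniteDimensional ℝ W]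
    (f : V →ᵃ[ℝ] W)
    {A : Type*} [Fintype A] (C : A → ℤ) (X : A → Set V)
    (hXne : ∀ a, (X a).Nonempty) (hXcpt : ∀ a, IsCompact (X a))
    (hXcvx : ∀ a, Convex ℝ (X a)) :
    ((∀ v : V, ∑ a, C a * (X a).indicator 1 v = 0) →
      ∀ w : W, ∑ a, C a * (f '' X a).indicator 1 w = 0) ∧
    (∀ (B : Type) [Fintype B], ∀ (D : B → ℤ) (Y : B → Set V),
      (∀ b, (Y b).Nonempty) → (∀ b, IsCompact (Y b)) → (∀ b, Convex ℝ (Y b)) →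
      (∀ v : V, ∑ a, C a * (X a).indicator 1 v = ∑ b, D b * (Y b).indicator 1 v) →
      ∀ w : W, ∑ a, C a * (f '' X a).indicator 1 w = ∑ b, D b * (f '' Y b).indicator 1 w) ∧
    (∀ (IV : cfGroup V →+ ℤ) (IW : cfGroup W →+ ℤ),
      (∀ (S : Set V), S.Nonempty → IsCompact S → Convex ℝ S →
        ∀ hmem : (S.indicator 1 : V → ℤ) ∈ cfGroup V, IV ⟨S.indicator 1, hmem⟩ = 1) →
      (∀ (S : Set W), S.Nonempty → IsCompact S → Convex ℝ S →
        ∀ hmem : (S.indicator 1 : W → ℤ) ∈ cfGroup W, IW ⟨S.indicator 1, hmem⟩ = 1) →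
      ∀ (hφ : (fun v : V => ∑ a, C a * (X a).indicator 1 v) ∈ cfGroup V)
        (hfφ : (fun w : W => ∑ a, C a * (f '' X a).indicator 1 w) ∈ cfGroup W),
        IW ⟨fun w : W => ∑ a, C a * (f '' X a).indicator 1 w, hfφ⟩ =
        IV ⟨fun v : V => ∑ a, C a * (X a).indicator 1 v, hφ⟩) := by
  classical
  refine ⟨push_zero f C X hXcpt hXcvx, ?_, ?_⟩
  · intro B _ D Y hYne hYcpt hYcvx hrel w
    set C' : A ⊕ B → ℤ := Sum.elim C (fun b => -D b) with hC'
    set X' : A ⊕ B → Set V := Sum.elim X Y with hX'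
    have hcpt' : ∀ e, IsCompact (X' e) := by rintro (a | b); exacts [hXcpt a, hYcpt b]
    have hcvx' : ∀ e, Convex ℝ (X' e) := by rintro (a | b); exacts [hXcvx a, hYcvx b]
    have hrel' : ∀ v : V, ∑ e, C' e * (X' e).indicator 1 v = 0 := by
      intro v
      rw [Fintype.sum_sum_type]
      simp only [hC', hX', Sum.elim_inl, Sum.elim_inr, neg_mul, Finset.sum_neg_distrib]
      rw [hrel v]
      exact add_neg_cancel _
    have h0 := push_zero f C' X' hcpt' hcvx' hrel' w
    rw [Fintype.sum_sum_type] at h0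
    simp only [hC', hX', Sum.elim_inl, Sum.elim_inr, neg_mul, Finset.sum_neg_distrib] at h0
    linarith
  · intro IV IW hIV hIW hφ hfφ
    rw [integral_eval IV hIV C X hXne hXcpt hXcvx hφ,
      integral_eval IW hIW C (fun a => f '' X a) (fun a => (hXne a).image f)
        (fun a => (hXcpt a).image f.continuous_of_finiteDimensional)
        (fun a => (hXcvx a).affine_image f) hfφ]
end
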